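/- arXiv:1106.2555 — 4 statements merged into one kernel-verified Lean document; each statement's English description precedes it below -/
import Mathlib

section
/- Let v : ℝⁿ → ℝⁿ be a bounded vector field that is Lipschitz with constant L, let Φ^v_t denote its flow, and let μ, ν ∈ M be two probability measures. Then for every p ≥ 1 and t ≥ 0: W_p(Φ^v_t # μ, Φ^v_t # ν) ≤ e^{((p+1)/p) L t} · W_p(μ, ν). -/
open MeasureTheory Set
open scoped RealInnerProductSpace

noncomputable section

abbrev En (n : ℕ) : Type := EuclideanSpace ℝ (Fin n)

/-- `𝓜`: probability measures on ℝⁿ with compact support, absolutely continuous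
with respect to Lebesgue measure. -/
def MemM (n : ℕ) (μ : Measure (En n)) : Prop :=
  IsProbabilityMeasure μ ∧ μ ≪ (volume : Measure (En n)) ∧
    ∃ K : Set (En n), IsCompact K ∧ μ Kᶜ = 0

/-- A finite positive measure on ℝⁿ, absolutely continuous with respect to Lebesgue
measure and compactly supported. -/
def NiceMeasure (n : ℕ) (μ : Measure (En n)) : Prop :=
  IsFiniteMeasure μ ∧ μ ≪ (volume : Measure (En n)) ∧
    ∃ K : Set (En n), IsCompact K ∧ μ Kᶜ = 0

/-- Wasserstein distance of exponent `p`, in the Monge (transport-map) formulation: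
`W_p(μ,ν) = inf { (∫ ‖γ x - x‖^p dμ)^(1/p) : γ measurable, γ#μ = ν }`. -/
def Wp (n : ℕ) (p : ℝ) (μ ν : Measure (En n)) : ℝ :=
  sInf { c : ℝ | ∃ γ : En n → En n, Measurable γ ∧ Measure.map γ μ = ν ∧
    c = (∫ x, ‖γ x - x‖ ^ p ∂μ) ^ (1 / p) }

/-- `Φ` is the flow of the vector field `v`: `Φ 0 x = x` and `∂ₜ Φ t x = v (Φ t x)`. -/
def IsFlow (n : ℕ) (v : En n → En n) (Φ : ℝ → En n → En n) : Prop :=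
  (∀ x, Φ 0 x = x) ∧ ∀ x t, HasDerivAt (fun s => Φ s x) (v (Φ t x)) t

/-- Hypothesis (H): `v[μ]` is `C¹`, uniformly Lipschitz (constant `L`), uniformly
bounded (constant `M`), and `μ ↦ v[μ]` is Lipschitz from `(𝓜, W_p)` to `C⁰` with
constant `K`. -/
def HypH (n : ℕ) (p : ℝ) (v : Measure (En n) → En n → En n) (L M K : ℝ) : Prop :=
  0 < L ∧ 0 < M ∧ 0 < K ∧
  (∀ μ, MemM n μ → ContDiff ℝ 1 (v μ)) ∧
  (∀ μ, MemM n μ → ∀ x y, ‖v μ x - v μ y‖ ≤ L * ‖x - y‖) ∧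
  (∀ μ, MemM n μ → ∀ x, ‖v μ x‖ ≤ M) ∧
  (∀ μ ν, MemM n μ → MemM n ν → ∀ x, ‖v μ x - v ν x‖ ≤ K * Wp n p μ ν)

/-- Scheme 1 (semi-discrete in time Lagrangian scheme) with time step `Δt` on `[0,T]`:
`μ 0 = μ₀` and, on each interval `[iΔt, (i+1)Δt]`, `μ t` is the push-forward of
`μ (iΔt)` by the flow of the frozen vector field `v[μ (iΔt)]`. -/
def Scheme1 (n : ℕ) (v : Measure (En n) → En n → En n) (μ₀ : Measure (En n))
    (Δt T : ℝ) (μ : ℝ → Measure (En n)) : Prop :=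
  μ 0 = μ₀ ∧
  ∀ i : ℕ, ∀ t : ℝ, (i : ℝ) * Δt ≤ t → t ≤ ((i : ℝ) + 1) * Δt → t ≤ T →
    ∃ Φ : ℝ → En n → En n, IsFlow n (v (μ ((i : ℝ) * Δt))) Φ ∧
      μ t = Measure.map (Φ (t - (i : ℝ) * Δt)) (μ ((i : ℝ) * Δt))

/-- Weak (distributional) solution of `∂ₜ μₜ + ∇·(v[μₜ] μₜ) = 0` on `[0,T]`:
for every test function `f ∈ C_c^∞([0,T] × ℝⁿ)`,
`∫_0^T ∫ (∂ₜ f + v[μₜ]·∇f) dμₜ dt = 0`. -/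
def IsWeakSolution (n : ℕ) (v : Measure (En n) → En n → En n) (T : ℝ)
    (μ : ℝ → Measure (En n)) : Prop :=
  ∀ f : ℝ → En n → ℝ,
    ContDiff ℝ (⊤ : ℕ∞) (Function.uncurry f) →
    HasCompactSupport (Function.uncurry f) →
    (∫ t in Icc (0 : ℝ) T,
      ∫ x, (deriv (fun s => f s x) t + ⟪v (μ t) x, gradient (fun y => f t y) x⟫)
        ∂(μ t)) = 0

/-- Continuity in time with respect to the Wasserstein distance `W_p`, on `[0,T]`. -/
def WpContinuousOn (n : ℕ) (p T : ℝ) (μ : ℝ → Measure (En n)) : Prop :=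
  ∀ t ∈ Icc (0 : ℝ) T, ∀ ε > 0, ∃ δ > 0, ∀ s ∈ Icc (0 : ℝ) T, |s - t| < δ →
    Wp n p (μ s) (μ t) < ε

/-- The axis-parallel grid cell of side `Δx` indexed by `k : Fin n → ℤ`. -/
def gridCell (n : ℕ) (Δx : ℝ) (k : Fin n → ℤ) : Set (En n) :=
  {x | ∀ i, (k i : ℝ) * Δx ≤ x i ∧ x i < ((k i : ℝ) + 1) * Δx}

/-- The index of the grid cell of side `Δx` containing `x`. -/
def gridIdx (n : ℕ) (Δx : ℝ) (x : En n) : Fin n → ℤ := fun i => ⌊x i / Δx⌋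

/-- Grid discretization `G[μ]`: the measure which, on each cell `□` of the grid of
side `Δx`, has constant density `μ(□)/Δxⁿ` with respect to Lebesgue measure. -/
def gridDisc (n : ℕ) (Δx : ℝ) (μ : Measure (En n)) : Measure (En n) :=
  (volume : Measure (En n)).withDensity
    (fun x => μ (gridCell n Δx (gridIdx n Δx x)) / ENNReal.ofReal (Δx ^ n))

/-- `L¹` distance between two measures, via their densities (Radon–Nikodym
derivatives) with respect to Lebesgue measure. -/
def L1dist (n : ℕ) (μ ν : Measure (En n)) : ℝ :=
  ∫ x, |(μ.rnDeriv (volume : Measure (En n)) x).toReal -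
        (ν.rnDeriv (volume : Measure (En n)) x).toReal|

section AuxFlow
open MeasureTheory Set
variable {E : Type*} [NormedAddCommGroup E] [NormedSpace ℝ E]
variable {v : E → E} {K : NNReal} {Φ : ℝ → E → E}

/-- Uniqueness of ODE solutions on all of ℝ. -/
lemma my_ode_unique (hK : LipschitzWith K v) {f g : ℝ → E}
    (hf : ∀ s, HasDerivAt f (v (f s)) s) (hg : ∀ s, HasDerivAt g (v (g s)) s)
    {a : ℝ} (hfg : f a = g a) : f = g := by
  funext r
  have h := ODE_solution_unique_of_mem_Icc (v := fun _ : ℝ => v)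
    (s := fun _ : ℝ => (univ : Set E)) (K := K)
    (a := min a r - 1) (b := max a r + 1) (t₀ := a)
    (fun _ _ => hK.lipschitzOnWith)
    ⟨by have := min_le_left a r; linarith, by have := le_max_left a r; linarith⟩
    (fun s _ => (hf s).continuousAt.continuousWithinAt)
    (fun s _ => hf s) (fun _ _ => trivial)
    (fun s _ => (hg s).continuousAt.continuousWithinAt)
    (fun s _ => hg s) (fun _ _ => trivial) hfg
  exact h ⟨by have := min_le_right a r; linarith, by have := le_max_right a r; linarith⟩

/-- Gronwall estimate for two solutions. -/
lemma my_ode_dist (hK : LipschitzWith K v) {f g : ℝ → E}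
    (hf : ∀ s, HasDerivAt f (v (f s)) s) (hg : ∀ s, HasDerivAt g (v (g s)) s)
    {t : ℝ} (ht : 0 ≤ t) :
    dist (f t) (g t) ≤ dist (f 0) (g 0) * Real.exp (K * t) := by
  have h := dist_le_of_trajectories_ODE (v := fun _ : ℝ => v) (K := K)
    (a := 0) (b := t) (δ := dist (f 0) (g 0))
    (fun _ => hK)
    (fun s _ => (hf s).continuousAt.continuousWithinAt)
    (fun s _ => (hf s).hasDerivWithinAt)
    (fun s _ => (hg s).continuousAt.continuousWithinAt)
    (fun s _ => (hg s).hasDerivWithinAt)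
    le_rfl t ⟨ht, le_rfl⟩
  simpa using h

lemma my_flow_deriv (hΦ : ∀ x s, HasDerivAt (fun s => Φ s x) (v (Φ s x)) s)
    (x : E) (b : ℝ) : ∀ s : ℝ, HasDerivAt (fun s => Φ (s - b) x) (v (Φ (s - b) x)) s := by
  intro s
  have h1 : HasDerivAt (fun u : ℝ => u - b) 1 s := (hasDerivAt_id s).sub_const b
  have := HasDerivAt.scomp_of_eq s (hΦ x (s - b)) h1 rfl
  simpa [Function.comp_def] using this

lemma my_flow_add (hK : LipschitzWith K v)
    (hΦ0 : ∀ x, Φ 0 x = x) (hΦ : ∀ x s, HasDerivAt (fun s => Φ s x) (v (Φ s x)) s)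
    (a b : ℝ) (x : E) : Φ (a + b) x = Φ a (Φ b x) := by
  have h := my_ode_unique hK (f := fun s => Φ s x) (g := fun s => Φ (s - b) (Φ b x))
    (hΦ x) (my_flow_deriv hΦ (Φ b x) b) (a := b) (by simp [hΦ0])
  have := congrFun h (a + b)
  simpa using this

lemma my_flow_rev_deriv (hΦ : ∀ x s, HasDerivAt (fun s => Φ s x) (v (Φ s x)) s)
    (x : E) : ∀ s : ℝ, HasDerivAt (fun s => Φ (-s) x) ((fun y => -v y) (Φ (-s) x)) s := by
  intro s
  have h1 : HasDerivAt (fun u : ℝ => -u) (-1) s := (hasDerivAt_id s).neg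
  have := HasDerivAt.scomp_of_eq s (hΦ x (-s)) h1 rfl
  simpa [Function.comp_def] using this

/-- Forward Lipschitz bound for the flow. -/
lemma my_flow_lip (hK : LipschitzWith K v)
    (hΦ : ∀ x s, HasDerivAt (fun s => Φ s x) (v (Φ s x)) s)
    {t : ℝ} (ht : 0 ≤ t) (x y : E) :
    dist (Φ t x) (Φ t y) ≤ dist (Φ 0 x) (Φ 0 y) * Real.exp (K * t) :=
  my_ode_dist hK (hΦ x) (hΦ y) ht

/-- Backward Lipschitz bound for the flow. -/
lemma my_flow_lip_rev (hK : LipschitzWith K v)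
    (hΦ : ∀ x s, HasDerivAt (fun s => Φ s x) (v (Φ s x)) s)
    {t : ℝ} (ht : 0 ≤ t) (x y : E) :
    dist (Φ (-t) x) (Φ (-t) y) ≤ dist (Φ 0 x) (Φ 0 y) * Real.exp (K * t) := by
  have := my_ode_dist (v := fun y => -v y)
    (LipschitzWith.of_dist_le_mul fun a b => by
      simpa [dist_neg_neg] using hK.dist_le_mul a b)
    (my_flow_rev_deriv hΦ x) (my_flow_rev_deriv hΦ y) ht
  simpa using this

lemma my_sInf_le {S T : Set ℝ} {E0 : ℝ} (hE : 0 < E0) (_hS : BddBelow S)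
    (hempty : T = ∅ → S = ∅) (hle : ∀ c ∈ T, sInf S ≤ E0 * c) :
    sInf S ≤ E0 * sInf T := by
  rcases eq_empty_or_nonempty T with hT | hT
  · rw [hempty hT, hT, Real.sInf_empty]; simp
  · have h2 : sInf S / E0 ≤ sInf T :=
      le_csInf hT fun c hc => (div_le_iff₀ hE).mpr (by rw [mul_comm]; exact hle c hc)
    have h3 := (div_le_iff₀ hE).mp h2
    rw [mul_comm]; exact h3

end AuxFlow

/-- `W_p(Φᵗ#μ, Φᵗ#ν) ≤ e^{((p+1)/p) L t} W_p(μ,ν)` for the flow `Φ` of a bounded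
`L`-Lipschitz vector field `v`. -/
theorem stmt2 (n : ℕ) (p L t : ℝ) (hp : 1 ≤ p) (ht : 0 ≤ t)
    (v : En n → En n)
    (hvB : ∃ C : ℝ, ∀ x, ‖v x‖ ≤ C)
    (hvL : ∀ x y, ‖v x - v y‖ ≤ L * ‖x - y‖)
    (Φ : ℝ → En n → En n) (hΦ : IsFlow n v Φ)
    (μ ν : Measure (En n)) (hμ : MemM n μ) (hν : MemM n ν) :
    Wp n p (Measure.map (Φ t) μ) (Measure.map (Φ t) ν) ≤
      Real.exp ((p + 1) / p * L * t) * Wp n p μ ν := by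
  have hp0 : (0:ℝ) < p := by linarith
  have hpne : p ≠ 0 := ne_of_gt hp0
  obtain ⟨hμP, hμac, K₁, hK₁c, hK₁0⟩ := hμ
  obtain ⟨hνP, hνac, K₂, hK₂c, hK₂0⟩ := hν
  haveI := hμP; haveI := hνP
  -- elements of a `Wp` set are nonnegative
  have hnn : ∀ (ρ σ : Measure (En n)) (c : ℝ),
      (∃ γ : En n → En n, Measurable γ ∧ Measure.map γ ρ = σ ∧
        c = (∫ x, ‖γ x - x‖ ^ p ∂ρ) ^ (1 / p)) → 0 ≤ c := by
    rintro ρ σ c ⟨γ, -, -, rfl⟩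
    exact Real.rpow_nonneg
      (integral_nonneg fun x => Real.rpow_nonneg (norm_nonneg _) p) _
  rcases Nat.eq_zero_or_pos n with hn | hn
  · -- degenerate case `n = 0`
    subst hn
    haveI : Subsingleton (En 0) := ⟨fun a b => PiLp.ext fun i => i.elim0⟩
    have hid : Φ t = id := funext fun x => Subsingleton.elim _ _
    have hμν : μ = ν := by
      ext s hs
      rcases s.eq_empty_or_nonempty with rfl | hne
      · simp
      · have hs' : s = univ := eq_univ_iff_forall.mpr fun x =>
          hne.elim fun y hy => (Subsingleton.elim y x ▸ hy)
        rw [hs', measure_univ, measure_univ]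
    have h0 : ∀ ρ : Measure (En 0), Wp 0 p ρ ρ = 0 := by
      intro ρ
      have hmem : (0:ℝ) ∈ {c : ℝ | ∃ γ : En 0 → En 0, Measurable γ ∧
          Measure.map γ ρ = ρ ∧ c = (∫ x, ‖γ x - x‖ ^ p ∂ρ) ^ (1 / p)} := by
        refine ⟨id, measurable_id, Measure.map_id, ?_⟩
        simp [Real.zero_rpow hpne, Real.zero_rpow (inv_ne_zero hpne)]
      refine le_antisymm (csInf_le ⟨0, fun c hc => hnn _ _ c hc⟩ hmem)
        (le_csInf ⟨0, hmem⟩ fun c hc => hnn _ _ c hc)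
    rw [hid, Measure.map_id, hμν]
    simp [h0 ν]
  · -- main case `1 ≤ n`
    have hL0 : 0 ≤ L := by
      set x₀ : En n := EuclideanSpace.single ⟨0, hn⟩ (1:ℝ) with hx₀
      have h := hvL x₀ 0
      have hx : ‖x₀ - 0‖ = 1 := by
        rw [sub_zero, hx₀, EuclideanSpace.norm_single]; norm_num
      rw [hx, mul_one] at h
      exact le_trans (norm_nonneg _) h
    set K : NNReal := ⟨L, hL0⟩ with hKdef
    have hK : LipschitzWith K v := LipschitzWith.of_dist_le_mul fun x y => by
      rw [dist_eq_norm, dist_eq_norm]; exact hvL x y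
    obtain ⟨hΦ0, hΦd⟩ := hΦ
    have hadd := my_flow_add hK hΦ0 hΦd
    set Ψ : En n → En n := Φ (-t) with hΨdef
    have hΨΦ : ∀ x, Ψ (Φ t x) = x := fun x => by
      rw [hΨdef, ← hadd (-t) t x, neg_add_cancel, hΦ0]
    -- Lipschitz bounds
    have hlip : ∀ x y, dist (Φ t x) (Φ t y) ≤ Real.exp (L * t) * dist x y := by
      intro x y
      have h := my_flow_lip hK hΦd ht x y
      rw [hΦ0, hΦ0] at h
      rw [mul_comm]
      exact h
    have hlipΨ : ∀ x y, dist (Ψ x) (Ψ y) ≤ Real.exp (L * t) * dist x y := by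
      intro x y
      have h := my_flow_lip_rev hK hΦd ht x y
      rw [hΦ0, hΦ0] at h
      rw [mul_comm]
      exact h
    have hΦtm : Measurable (Φ t) :=
      (LipschitzWith.of_dist_le_mul (K := (Real.exp (L*t)).toNNReal) fun x y => by
        rw [Real.coe_toNNReal _ (Real.exp_nonneg _)]; exact hlip x y).continuous.measurable
    have hΨm : Measurable Ψ :=
      (LipschitzWith.of_dist_le_mul (K := (Real.exp (L*t)).toNNReal) fun x y => by
        rw [Real.coe_toNNReal _ (Real.exp_nonneg _)]; exact hlipΨ x y).continuous.measurable
    -- now the Wasserstein estimate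
    unfold Wp
    refine my_sInf_le (Real.exp_pos _) ⟨0, fun c hc => hnn _ _ c hc⟩ ?_ ?_
    · -- if no transport map μ → ν exists, none exists for the push-forwards either
      intro hT
      rw [eq_empty_iff_forall_notMem] at hT ⊢
      rintro c ⟨γ', hγ'm, hγ'map, rfl⟩
      refine hT ((∫ x, ‖(fun y => Ψ (γ' (Φ t y))) x - x‖ ^ p ∂μ) ^ (1/p))
        ⟨fun y => Ψ (γ' (Φ t y)), (hΨm.comp hγ'm).comp hΦtm, ?_, rfl⟩
      have h1 : (fun y => Ψ (γ' (Φ t y))) = (Ψ ∘ γ') ∘ Φ t := rfl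
      rw [h1, ← Measure.map_map (hΨm.comp hγ'm) hΦtm,
        ← Measure.map_map hΨm hγ'm, hγ'map, Measure.map_map hΨm hΦtm]
      have h2 : Ψ ∘ Φ t = id := funext hΨΦ
      rw [h2, Measure.map_id]
    · -- the quantitative estimate for each transport map
      rintro c ⟨γ, hγm, hγmap, rfl⟩
      set γ' : En n → En n := fun x => Φ t (γ (Ψ x)) with hγ'def
      have hγ'm : Measurable γ' := hΦtm.comp (hγm.comp hΨm)
      have hmap' : Measure.map γ' (Measure.map (Φ t) μ) = Measure.map (Φ t) ν := by
        rw [Measure.map_map hγ'm hΦtm]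
        have h3 : γ' ∘ Φ t = Φ t ∘ γ := funext fun y => by
          simp only [Function.comp_apply, hγ'def, hΨΦ y]
        rw [h3, ← Measure.map_map hΦtm hγm, hγmap]
      have hSmem : ((∫ x, ‖γ' x - x‖ ^ p ∂(Measure.map (Φ t) μ)) ^ (1/p)) ∈
          {c : ℝ | ∃ γ : En n → En n, Measurable γ ∧
            Measure.map γ (Measure.map (Φ t) μ) = Measure.map (Φ t) ν ∧
            c = (∫ x, ‖γ x - x‖ ^ p ∂(Measure.map (Φ t) μ)) ^ (1 / p)} :=
        ⟨γ', hγ'm, hmap', rfl⟩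
      refine le_trans (csInf_le ⟨0, fun c hc => hnn _ _ c hc⟩ hSmem) ?_
      -- rewrite the integral over the push-forward
      have hmeas : Measurable fun x => ‖γ' x - x‖ ^ p :=
        ((hγ'm.sub measurable_id).norm).pow measurable_const
      have hint : (∫ x, ‖γ' x - x‖ ^ p ∂(Measure.map (Φ t) μ))
          = ∫ y, ‖Φ t (γ y) - Φ t y‖ ^ p ∂μ := by
        rw [integral_map hΦtm.aemeasurable hmeas.aestronglyMeasurable]
        refine integral_congr_ae (Filter.Eventually.of_forall fun y => ?_)
        simp only [hγ'def, hΨΦ y]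
      rw [hint]
      -- integrability of the original cost
      obtain ⟨R₁, hR₁⟩ := isBounded_iff_forall_norm_le.mp hK₁c.isBounded
      obtain ⟨R₂, hR₂⟩ := isBounded_iff_forall_norm_le.mp hK₂c.isBounded
      have hae1 : ∀ᵐ y ∂μ, y ∈ K₁ := by
        rw [MeasureTheory.ae_iff]
        exact hK₁0
      have hae2 : ∀ᵐ y ∂μ, γ y ∈ K₂ := by
        rw [MeasureTheory.ae_iff]
        have h4 : μ (γ ⁻¹' K₂ᶜ) = 0 := by
          rw [← Measure.map_apply hγm hK₂c.isClosed.measurableSet.compl, hγmap]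
          exact hK₂0
        exact h4
      have hgmeas : Measurable fun y => ‖γ y - y‖ ^ p :=
        ((hγm.sub measurable_id).norm).pow measurable_const
      have hgint : Integrable (fun y => ‖γ y - y‖ ^ p) μ := by
        refine Integrable.mono' (integrable_const ((R₁ + R₂) ^ p))
          hgmeas.aestronglyMeasurable ?_
        filter_upwards [hae1, hae2] with y h1 h2
        rw [Real.norm_eq_abs, abs_of_nonneg (Real.rpow_nonneg (norm_nonneg _) _)]
        refine Real.rpow_le_rpow (norm_nonneg _) ?_ hp0.le
        calc ‖γ y - y‖ ≤ ‖γ y‖ + ‖y‖ := norm_sub_le _ _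
          _ ≤ R₂ + R₁ := add_le_add (hR₂ _ h2) (hR₁ _ h1)
          _ = R₁ + R₂ := add_comm _ _
      -- pointwise bound and monotonicity of the integral
      have hIle : (∫ y, ‖Φ t (γ y) - Φ t y‖ ^ p ∂μ)
          ≤ Real.exp (L*t) ^ p * ∫ y, ‖γ y - y‖ ^ p ∂μ := by
        rw [← integral_const_mul]
        refine integral_mono_of_nonneg
          (Filter.Eventually.of_forall fun y => Real.rpow_nonneg (norm_nonneg _) _)
          (hgint.const_mul _)
          (Filter.Eventually.of_forall fun y => ?_)
        have h5 : ‖Φ t (γ y) - Φ t y‖ ≤ Real.exp (L*t) * ‖γ y - y‖ := by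
          have := hlip (γ y) y
          rwa [dist_eq_norm, dist_eq_norm] at this
        calc ‖Φ t (γ y) - Φ t y‖ ^ p
            ≤ (Real.exp (L*t) * ‖γ y - y‖) ^ p :=
              Real.rpow_le_rpow (norm_nonneg _) h5 hp0.le
          _ = Real.exp (L*t) ^ p * ‖γ y - y‖ ^ p :=
              Real.mul_rpow (Real.exp_nonneg _) (norm_nonneg _)
      have hintnn : (0:ℝ) ≤ ∫ y, ‖γ y - y‖ ^ p ∂μ :=
        integral_nonneg fun y => Real.rpow_nonneg (norm_nonneg _) _
      calc (∫ y, ‖Φ t (γ y) - Φ t y‖ ^ p ∂μ) ^ (1/p)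
          ≤ (Real.exp (L*t) ^ p * ∫ y, ‖γ y - y‖ ^ p ∂μ) ^ (1/p) :=
            Real.rpow_le_rpow
              (integral_nonneg fun y => Real.rpow_nonneg (norm_nonneg _) _)
              hIle (by positivity)
        _ = Real.exp (L*t) * (∫ y, ‖γ y - y‖ ^ p ∂μ) ^ (1/p) := by
            rw [Real.mul_rpow (Real.rpow_nonneg (Real.exp_nonneg _) _) hintnn,
              ← Real.rpow_mul (Real.exp_nonneg _), mul_one_div_cancel hpne,
              Real.rpow_one]
        _ ≤ Real.exp ((p + 1) / p * L * t) * (∫ y, ‖γ y - y‖ ^ p ∂μ) ^ (1/p) := by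
            refine mul_le_mul_of_nonneg_right ?_ (Real.rpow_nonneg hintnn _)
            refine Real.exp_le_exp.mpr ?_
            have h6 : (1:ℝ) ≤ (p+1)/p := by
              rw [le_div_iff₀ hp0]; linarith
            have h7 : 0 ≤ L * t := mul_nonneg hL0 ht
            have h8 := mul_le_mul_of_nonneg_right h6 h7
            nlinarith [h8]


end
end

section
/- Let v, w : ℝⁿ → ℝⁿ be two bounded vector fields, both Lipschitz with constant L > 0, with flows Φ^v_t and Φ^w_t, and let μ, ν ∈ M be two probability measures. Then for every p ≥ 1 and t ≥ 0: W_p(Φ^v_t # μ, Φ^w_t # ν) ≤ e^{((p+1)/p) L t} · W_p(μ, ν) + (e^{Lt/p}(e^{Lt} − 1)/L) · ‖v − w‖_{C⁰}. -/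
open MeasureTheory Set
open scoped ENNReal
open scoped RealInnerProductSpace

noncomputable section

namespace Aux

variable {n : ℕ}

variable {n : ℕ}

lemma flow_cont_time {v : En n → En n} {Φ : ℝ → En n → En n}
    (hΦ : IsFlow n v Φ) (x : En n) : Continuous fun s => Φ s x :=
  continuous_iff_continuousAt.2 fun s => (hΦ.2 x s).continuousAt

lemma lip_nn {v : En n → En n} {L : ℝ} (hL : 0 < L)
    (hvL : ∀ x y, ‖v x - v y‖ ≤ L * ‖x - y‖) : LipschitzWith L.toNNReal v :=
  LipschitzWith.of_dist_le_mul fun a b => by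
    simpa [dist_eq_norm, Real.coe_toNNReal _ hL.le] using hvL a b

lemma flow_lipschitz {v : En n → En n} {L : ℝ} (hL : 0 < L)
    (hvL : ∀ x y, ‖v x - v y‖ ≤ L * ‖x - y‖)
    {Φ : ℝ → En n → En n} (hΦ : IsFlow n v Φ) {t : ℝ} (ht : 0 ≤ t)
    (y z : En n) : dist (Φ t y) (Φ t z) ≤ dist y z * Real.exp (L * t) := by
  have h := dist_le_of_trajectories_ODE (v := fun _ => v) (K := L.toNNReal)
    (f := fun s => Φ s y) (g := fun s => Φ s z) (a := 0) (b := t) (δ := dist y z)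
    (fun _ => lip_nn hL hvL)
    ((flow_cont_time hΦ y).continuousOn)
    (fun s _ => (hΦ.2 y s).hasDerivWithinAt)
    ((flow_cont_time hΦ z).continuousOn)
    (fun s _ => (hΦ.2 z s).hasDerivWithinAt)
    (by simp only [hΦ.1]; exact le_refl _) t ⟨ht, le_refl t⟩
  simpa [Real.coe_toNNReal _ hL.le] using h

lemma isFlow_neg {v : En n → En n} {Φ : ℝ → En n → En n} (hΦ : IsFlow n v Φ) :
    IsFlow n (fun x => -(v x)) (fun s x => Φ (-s) x) := by
  constructor
  · intro x; simpa using hΦ.1 x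
  · intro x s
    have h1 : HasDerivAt (fun u : ℝ => -u) (-1) s := (hasDerivAt_neg s)
    have h2 := (hΦ.2 x (-s)).scomp (h := fun u : ℝ => -u) (x := s) h1
    simpa [Function.comp_def] using h2

lemma neg_lip {v : En n → En n} {L : ℝ}
    (hvL : ∀ x y, ‖v x - v y‖ ≤ L * ‖x - y‖) :
    ∀ x y, ‖(-(v x)) - (-(v y))‖ ≤ L * ‖x - y‖ := by
  intro x y
  rw [show (-(v x)) - (-(v y)) = -(v x - v y) by abel, norm_neg]
  exact hvL x y

lemma flow_cont {v : En n → En n} {L : ℝ} (hL : 0 < L)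
    (hvL : ∀ x y, ‖v x - v y‖ ≤ L * ‖x - y‖)
    {Φ : ℝ → En n → En n} (hΦ : IsFlow n v Φ) {t : ℝ} (ht : 0 ≤ t) :
    Continuous fun x => Φ t x := by
  have : LipschitzWith (Real.exp (L * t)).toNNReal (fun x => Φ t x) :=
    LipschitzWith.of_dist_le_mul fun y z => by
      rw [Real.coe_toNNReal _ (Real.exp_pos _).le]
      simpa [mul_comm] using flow_lipschitz hL hvL hΦ ht y z
  exact this.continuous

lemma flow_cont_neg {v : En n → En n} {L : ℝ} (hL : 0 < L)
    (hvL : ∀ x y, ‖v x - v y‖ ≤ L * ‖x - y‖)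
    {Φ : ℝ → En n → En n} (hΦ : IsFlow n v Φ) {t : ℝ} (ht : 0 ≤ t) :
    Continuous fun x => Φ (-t) x :=
  flow_cont hL (neg_lip hvL) (isFlow_neg hΦ) ht

lemma flow_inverse {v : En n → En n} {L : ℝ} (hL : 0 < L)
    (hvL : ∀ x y, ‖v x - v y‖ ≤ L * ‖x - y‖)
    {Φ : ℝ → En n → En n} (hΦ : IsFlow n v Φ) {t : ℝ} (ht : 0 ≤ t)
    (x : En n) : Φ (-t) (Φ t x) = x := by
  have hder : ∀ (z : En n) (s : ℝ), HasDerivAt (fun u => Φ (u - t) z) (v (Φ (s - t) z)) s := by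
    intro z s
    have h1 : HasDerivAt (fun u : ℝ => u - t) 1 s := (hasDerivAt_id s).sub_const t
    have h2 := (hΦ.2 z (s - t)).scomp (h := fun u : ℝ => u - t) (x := s) h1
    simpa [Function.comp_def] using h2
  have contf : ContinuousOn (fun s => Φ (s - t) (Φ t x)) (Icc 0 t) :=
    (continuous_iff_continuousAt.2 fun s => (hder (Φ t x) s).continuousAt).continuousOn
  have contg : ContinuousOn (fun s => Φ s x) (Icc 0 t) := (flow_cont_time hΦ x).continuousOn
  have key := ODE_solution_unique_of_mem_Icc_left (v := fun _ => v) (s := fun _ => univ)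
    (K := L.toNNReal) (fun _ _ => (lip_nn hL hvL).lipschitzOnWith)
    (f := fun s => Φ (s - t) (Φ t x)) (g := fun s => Φ s x) (a := 0) (b := t)
    contf (fun s _ => (hder (Φ t x) s).hasDerivWithinAt) (fun _ _ => trivial)
    contg (fun s _ => (hΦ.2 x s).hasDerivWithinAt) (fun _ _ => trivial)
    (by simp [hΦ.1])
  have h0 := key ⟨le_refl (0:ℝ), ht⟩
  simpa [hΦ.1, zero_sub] using h0

lemma flow_dist {v w : En n → En n} {L d : ℝ} (hL : 0 < L)
    (hwL : ∀ x y, ‖w x - w y‖ ≤ L * ‖x - y‖)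
    (hd : ∀ x, ‖v x - w x‖ ≤ d)
    {Φv Φw : ℝ → En n → En n} (hΦv : IsFlow n v Φv) (hΦw : IsFlow n w Φw)
    {t : ℝ} (ht : 0 ≤ t) (y z : En n) :
    dist (Φw t z) (Φv t y) ≤ dist z y * Real.exp (L * t) + d / L * (Real.exp (L * t) - 1) := by
  have h := dist_le_of_approx_trajectories_ODE (v := fun _ => w) (K := L.toNNReal)
    (f := fun s => Φw s z) (f' := fun s => w (Φw s z))
    (g := fun s => Φv s y) (g' := fun s => v (Φv s y)) (a := 0) (b := t)
    (εf := 0) (εg := d) (δ := dist z y)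
    (fun _ => lip_nn hL hwL)
    ((flow_cont_time hΦw z).continuousOn)
    (fun s _ => (hΦw.2 z s).hasDerivWithinAt)
    (fun s _ => by simp)
    ((flow_cont_time hΦv y).continuousOn)
    (fun s _ => (hΦv.2 y s).hasDerivWithinAt)
    (fun s _ => by simpa [dist_eq_norm] using hd (Φv s y))
    (by simp only [hΦw.1, hΦv.1]; exact le_refl _) t ⟨ht, le_refl t⟩
  rw [gronwallBound_of_K_ne_0 (by simp [Real.toNNReal_eq_zero, not_le, hL] : (L.toNNReal : ℝ) ≠ 0)]
    at h
  simpa [Real.coe_toNNReal _ hL.le] using h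

end Aux

namespace Aux2

lemma minkowski_aux {α E : Type*} [MeasurableSpace α] [NormedAddCommGroup E]
    (μ : Measure α) [IsProbabilityMeasure μ]
    {p a C : ℝ} (hp : 1 ≤ p) (ha : 0 ≤ a) (hC : 0 ≤ C)
    {A B : α → E} (hA : AEStronglyMeasurable A μ) (hB : AEStronglyMeasurable B μ)
    (hbd : ∀ x, ‖A x‖ ≤ a * ‖B x‖ + C) (hBp : MemLp B (ENNReal.ofReal p) μ) :
    (∫ x, ‖A x‖ ^ p ∂μ) ^ (1 / p) ≤ a * (∫ x, ‖B x‖ ^ p ∂μ) ^ (1 / p) + C := by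
  have hp0 : (0:ℝ) < p := lt_of_lt_of_le one_pos hp
  set P : ℝ≥0∞ := ENNReal.ofReal p with hP
  have hP0 : P ≠ 0 := by simp [hP, ENNReal.ofReal_eq_zero, not_le, hp0]
  have hPt : P ≠ ⊤ := ENNReal.ofReal_ne_top
  have hP1 : 1 ≤ P := ENNReal.one_le_ofReal.2 hp
  have hPr : P.toReal = p := ENNReal.toReal_ofReal hp0.le
  have hsm1 : AEStronglyMeasurable (fun x => a * ‖B x‖) μ := hB.norm.const_mul a
  have hsm2 : AEStronglyMeasurable (fun _ : α => C) μ := aestronglyMeasurable_const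
  have key : eLpNorm A P μ ≤ ENNReal.ofReal a * eLpNorm B P μ + ENNReal.ofReal C := by
    calc eLpNorm A P μ ≤ eLpNorm (fun x => a * ‖B x‖ + C) P μ :=
          eLpNorm_mono_real hbd
      _ ≤ eLpNorm (fun x => a * ‖B x‖) P μ + eLpNorm (fun _ : α => C) P μ := by
          have h := eLpNorm_add_le hsm1 hsm2 hP1
          simpa only [Pi.add_def] using h
      _ = ENNReal.ofReal a * eLpNorm B P μ + ENNReal.ofReal C := by
          congr 1
          · have : (fun x => a * ‖B x‖) = a • fun x => ‖B x‖ := rfl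
            rw [this, eLpNorm_const_smul, eLpNorm_norm, ← Real.enorm_eq_ofReal ha]
          · rw [eLpNorm_const C hP0 (IsProbabilityMeasure.ne_zero μ)]
            simp [Real.enorm_eq_ofReal hC]
  have hAp : MemLp A P μ := ⟨hA, lt_of_le_of_lt key
    (ENNReal.add_lt_top.2 ⟨ENNReal.mul_lt_top ENNReal.ofReal_lt_top hBp.2, ENNReal.ofReal_lt_top⟩)⟩
  have hAe := hAp.eLpNorm_eq_integral_rpow_norm hP0 hPt
  have hBe := hBp.eLpNorm_eq_integral_rpow_norm hP0 hPt
  rw [hAe, hBe, hPr] at key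
  rw [← ENNReal.ofReal_mul ha, ← ENNReal.ofReal_add (mul_nonneg ha
    (Real.rpow_nonneg (integral_nonneg fun x => Real.rpow_nonneg (norm_nonneg _) _) _)) hC] at key
  have := (ENNReal.ofReal_le_ofReal_iff (by positivity)).1 key
  simpa [one_div] using this

end Aux2

/-- `W_p(Φᵛₜ#μ, Φʷₜ#ν) ≤ e^{((p+1)/p)Lt} W_p(μ,ν) + (e^{Lt/p}(e^{Lt}-1)/L)‖v-w‖_{C⁰}`
for the flows of two bounded `L`-Lipschitz vector fields. -/
theorem stmt5 (n : ℕ) (p L t : ℝ) (hp : 1 ≤ p) (hL : 0 < L) (ht : 0 ≤ t)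
    (v w : En n → En n)
    (hvB : ∃ C : ℝ, ∀ x, ‖v x‖ ≤ C) (hwB : ∃ C : ℝ, ∀ x, ‖w x‖ ≤ C)
    (hvL : ∀ x y, ‖v x - v y‖ ≤ L * ‖x - y‖)
    (hwL : ∀ x y, ‖w x - w y‖ ≤ L * ‖x - y‖)
    (Φv Φw : ℝ → En n → En n) (hΦv : IsFlow n v Φv) (hΦw : IsFlow n w Φw)
    (μ ν : Measure (En n)) (hμ : MemM n μ) (hν : MemM n ν) :
    Wp n p (Measure.map (Φv t) μ) (Measure.map (Φw t) ν) ≤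
      Real.exp ((p + 1) / p * L * t) * Wp n p μ ν +
        Real.exp (L * t / p) * (Real.exp (L * t) - 1) / L * (⨆ x, ‖v x - w x‖) := by

  have hp0 : (0:ℝ) < p := lt_of_lt_of_le one_pos hp
  obtain ⟨Cv, hCv⟩ := hvB
  obtain ⟨Cw, hCw⟩ := hwB
  have hbddr : BddAbove (Set.range fun x => ‖v x - w x‖) :=
    ⟨Cv + Cw, by rintro r ⟨x, rfl⟩; exact (norm_sub_le _ _).trans (add_le_add (hCv x) (hCw x))⟩
  have hdle : ∀ x, ‖v x - w x‖ ≤ ⨆ x, ‖v x - w x‖ := fun x => le_ciSup hbddr x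
  set d := ⨆ x, ‖v x - w x‖ with hddef
  have hd0 : 0 ≤ d := le_trans (norm_nonneg _) (hdle 0)
  set E := Real.exp (L * t) with hEdef
  have hE1 : 1 ≤ E := Real.one_le_exp (mul_nonneg hL.le ht)
  set C := d / L * (E - 1) with hCdef
  have hC0 : 0 ≤ C := mul_nonneg (div_nonneg hd0 hL.le) (by linarith)
  have mΦv : Measurable (Φv t) := (Aux.flow_cont hL hvL hΦv ht).measurable
  have mΦw : Measurable (Φw t) := (Aux.flow_cont hL hwL hΦw ht).measurable
  have mΦvn : Measurable (Φv (-t)) := (Aux.flow_cont_neg hL hvL hΦv ht).measurable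
  have mΦwn : Measurable (Φw (-t)) := (Aux.flow_cont_neg hL hwL hΦw ht).measurable
  haveI : IsProbabilityMeasure μ := hμ.1
  haveI : IsProbabilityMeasure ν := hν.1
  set T : Set ℝ := {c : ℝ | ∃ γ : En n → En n, Measurable γ ∧ Measure.map γ μ = ν ∧
    c = (∫ x, ‖γ x - x‖ ^ p ∂μ) ^ (1 / p)} with hTdef
  set S : Set ℝ := {c : ℝ | ∃ γ : En n → En n, Measurable γ ∧
    Measure.map γ (Measure.map (Φv t) μ) = Measure.map (Φw t) ν ∧
    c = (∫ x, ‖γ x - x‖ ^ p ∂(Measure.map (Φv t) μ)) ^ (1 / p)} with hSdef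
  have hWT : Wp n p μ ν = sInf T := rfl
  have hWS : Wp n p (Measure.map (Φv t) μ) (Measure.map (Φw t) ν) = sInf S := rfl
  have hTnn : ∀ c ∈ T, 0 ≤ c := by
    rintro c ⟨γ, _, _, rfl⟩
    exact Real.rpow_nonneg (integral_nonneg fun x => Real.rpow_nonneg (norm_nonneg _) _) _
  have hSbdd : BddBelow S := by
    refine ⟨0, ?_⟩
    rintro c ⟨γ, _, _, rfl⟩
    exact Real.rpow_nonneg (integral_nonneg fun x => Real.rpow_nonneg (norm_nonneg _) _) _
  by_cases hT : T.Nonempty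
  · -- main case
    have key : ∀ c ∈ T, sInf S ≤ E * c + C := by
      rintro c ⟨γ₀, hγ₀, hmap, rfl⟩
      set γ : En n → En n := fun x => Φw t (γ₀ (Φv (-t) x)) with hγdef
      have mγ : Measurable γ := mΦw.comp (hγ₀.comp mΦvn)
      have hinv : ∀ y, γ (Φv t y) = Φw t (γ₀ y) := fun y => by
        rw [hγdef]; simp only
        rw [Aux.flow_inverse hL hvL hΦv ht y]
      have hmapγ : Measure.map γ (Measure.map (Φv t) μ) = Measure.map (Φw t) ν := by
        rw [Measure.map_map mγ mΦv, show γ ∘ Φv t = Φw t ∘ γ₀ from funext hinv,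
          ← Measure.map_map mΦw hγ₀, hmap]
      have hintsm : AEStronglyMeasurable (fun x => ‖γ x - x‖ ^ p) (Measure.map (Φv t) μ) :=
        ((Real.continuous_rpow_const hp0.le).measurable.comp
          (mγ.sub measurable_id).norm).aestronglyMeasurable
      have hchg : (∫ x, ‖γ x - x‖ ^ p ∂(Measure.map (Φv t) μ))
          = ∫ y, ‖Φw t (γ₀ y) - Φv t y‖ ^ p ∂μ := by
        rw [integral_map mΦv.aemeasurable hintsm]
        refine integral_congr_ae (Filter.Eventually.of_forall fun y => ?_)
        simp only [hinv y]
      obtain ⟨hμp, hμac, Kμ, hKμc, hKμ0⟩ := hμ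
      obtain ⟨hνp, hνac, Kν, hKνc, hKν0⟩ := hν
      obtain ⟨Rμ, hRμ⟩ := hKμc.isBounded.exists_norm_le
      obtain ⟨Rν, hRν⟩ := hKνc.isBounded.exists_norm_le
      have haeμ : ∀ᵐ y ∂μ, y ∈ Kμ := by
        rw [MeasureTheory.ae_iff]
        simpa [Set.compl_def] using hKμ0
      have haeν : ∀ᵐ y ∂μ, γ₀ y ∈ Kν := by
        have h2 : μ (γ₀ ⁻¹' Kνᶜ) = 0 := by
          rw [← Measure.map_apply hγ₀ hKνc.isClosed.measurableSet.compl, hmap, hKν0]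
        rw [MeasureTheory.ae_iff]
        simpa [Set.preimage, Set.compl_def] using h2
      have hBmem : MemLp (fun y => γ₀ y - y) (ENNReal.ofReal p) μ :=
        MemLp.of_bound (hγ₀.sub measurable_id).aestronglyMeasurable (Rν + Rμ)
          ((haeμ.and haeν).mono fun y hy => (norm_sub_le _ _).trans
            (add_le_add (hRν _ hy.2) (hRμ _ hy.1)))
      have hbd : ∀ y, ‖Φw t (γ₀ y) - Φv t y‖ ≤ E * ‖γ₀ y - y‖ + C := by
        intro y
        have h := Aux.flow_dist hL hwL hdle hΦv hΦw ht y (γ₀ y)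
        rw [dist_eq_norm, dist_eq_norm] at h
        rw [hCdef, hEdef]
        linarith [h, mul_comm (Real.exp (L * t)) ‖γ₀ y - y‖]
      have hmink : (∫ y, ‖Φw t (γ₀ y) - Φv t y‖ ^ p ∂μ) ^ (1 / p) ≤
          E * (∫ y, ‖γ₀ y - y‖ ^ p ∂μ) ^ (1 / p) + C :=
        Aux2.minkowski_aux μ hp (by rw [hEdef]; positivity) hC0
          (((mΦw.comp hγ₀).sub mΦv).aestronglyMeasurable)
          ((hγ₀.sub measurable_id).aestronglyMeasurable) hbd hBmem
      have hmem : ((∫ x, ‖γ x - x‖ ^ p ∂(Measure.map (Φv t) μ)) ^ (1 / p)) ∈ S :=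
        ⟨γ, mγ, hmapγ, rfl⟩
      calc sInf S ≤ (∫ x, ‖γ x - x‖ ^ p ∂(Measure.map (Φv t) μ)) ^ (1 / p) := csInf_le hSbdd hmem
        _ = (∫ y, ‖Φw t (γ₀ y) - Φv t y‖ ^ p ∂μ) ^ (1 / p) := by rw [hchg]
        _ ≤ E * (∫ y, ‖γ₀ y - y‖ ^ p ∂μ) ^ (1 / p) + C := hmink
    have hW0 : 0 ≤ Wp n p μ ν := by
      rw [hWT]; exact Real.sInf_nonneg hTnn
    have hstep : Wp n p (Measure.map (Φv t) μ) (Measure.map (Φw t) ν) ≤ E * Wp n p μ ν + C := by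
      have hEpos : (0:ℝ) < E := by rw [hEdef]; positivity
      have h1 : ∀ c ∈ T, (sInf S - C) / E ≤ c := by
        intro c hc
        rw [div_le_iff₀ hEpos]
        have := key c hc
        nlinarith
      have h2 := le_csInf hT h1
      rw [div_le_iff₀ hEpos] at h2
      rw [hWS, hWT]
      nlinarith
    have hEle : E ≤ Real.exp ((p + 1) / p * L * t) := by
      rw [hEdef]
      refine Real.exp_le_exp.2 ?_
      have h5 : 1 ≤ (p + 1) / p := by rw [le_div_iff₀ hp0]; linarith
      nlinarith [mul_nonneg hL.le ht]
    have h1p : 1 ≤ Real.exp (L * t / p) := Real.one_le_exp (by positivity)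
    have hq0 : 0 ≤ (E - 1) / L * d := mul_nonneg (div_nonneg (by linarith) hL.le) hd0
    have hterm2 : C ≤ Real.exp (L * t / p) * (E - 1) / L * d := by
      have h3 : 1 * ((E - 1) / L * d) ≤ Real.exp (L * t / p) * ((E - 1) / L * d) :=
        mul_le_mul_of_nonneg_right h1p hq0
      calc C = 1 * ((E - 1) / L * d) := by rw [hCdef]; ring
        _ ≤ Real.exp (L * t / p) * ((E - 1) / L * d) := h3
        _ = Real.exp (L * t / p) * (E - 1) / L * d := by ring
    have hterm1 : E * Wp n p μ ν ≤ Real.exp ((p + 1) / p * L * t) * Wp n p μ ν :=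
      mul_le_mul_of_nonneg_right hEle hW0
    calc Wp n p (Measure.map (Φv t) μ) (Measure.map (Φw t) ν) ≤ E * Wp n p μ ν + C := hstep
      _ ≤ Real.exp ((p + 1) / p * L * t) * Wp n p μ ν +
          Real.exp (L * t / p) * (E - 1) / L * d := by linarith
  · -- degenerate case : no transport map between μ and ν at all
    rw [Set.not_nonempty_iff_eq_empty] at hT
    have hSe : S = ∅ := by
      rw [Set.eq_empty_iff_forall_notMem]
      rintro c ⟨γ, mγ, hmapγ, rfl⟩
      have m1 : Measurable fun x => γ (Φv t x) := mγ.comp mΦv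
      have hmapγ₀ : Measure.map (fun x => Φw (-t) (γ (Φv t x))) μ = ν := by
        have e1 : Measure.map (fun x => Φw (-t) (γ (Φv t x))) μ
            = Measure.map (Φw (-t)) (Measure.map (fun x => γ (Φv t x)) μ) :=
          (Measure.map_map mΦwn m1).symm
        have e2 : Measure.map (fun x => γ (Φv t x)) μ
            = Measure.map γ (Measure.map (Φv t) μ) := (Measure.map_map mγ mΦv).symm
        rw [e1, e2, hmapγ, Measure.map_map mΦwn mΦw,
          show Φw (-t) ∘ Φw t = id from funext fun x => Aux.flow_inverse hL hwL hΦw ht x,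
          Measure.map_id]
      have : ((∫ x, ‖(fun x => Φw (-t) (γ (Φv t x))) x - x‖ ^ p ∂μ) ^ (1 / p)) ∈ T :=
        ⟨fun x => Φw (-t) (γ (Φv t x)), mΦwn.comp m1, hmapγ₀, rfl⟩
      rw [hT] at this
      exact this
    have hWl : Wp n p (Measure.map (Φv t) μ) (Measure.map (Φw t) ν) = 0 := by
      rw [hWS, hSe, Real.sInf_empty]
    have hWr : Wp n p μ ν = 0 := by rw [hWT, hT, Real.sInf_empty]
    rw [hWl, hWr, mul_zero, zero_add]
    exact mul_nonneg (div_nonneg (mul_nonneg (Real.exp_pos _).le (by linarith)) hL.le) hd0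

end
end

section
/- Let v, w : ℝⁿ → ℝⁿ be two bounded vector fields, both Lipschitz with constant L > 0, with flows Φ^v_t and Φ^w_t, and let μ, ν be finite positive measures on ℝⁿ, absolutely continuous with respect to Lebesgue measure and compactly supported, with μ(ℝⁿ) = ν(ℝⁿ) = C > 0 (not necessarily equal to 1). Then for every p ≥ 1 and t ≥ 0: W_p(Φ^v_t # μ, Φ^w_t # ν) ≤ e^{((p+1)/p) L t} · W_p(μ, ν) + μ(ℝⁿ)^{1/p} · (e^{Lt/p}(e^{Lt} − 1)/L) · ‖v − w‖_{C⁰}. -/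
open MeasureTheory Set
open scoped RealInnerProductSpace

noncomputable section

section Helpers

variable {n : ℕ}

lemma gron {L D t : ℝ} (hL : 0 < L) (ht : 0 ≤ t) {f f' : ℝ → En n}
    (hderiv : ∀ s, HasDerivAt f (f' s) s)
    (hbound : ∀ s, ‖f' s‖ ≤ L * ‖f s‖ + D) :
    ‖f t‖ ≤ ‖f 0‖ * Real.exp (L * t) + D / L * (Real.exp (L * t) - 1) := by
  have hcont : ContinuousOn f (Icc 0 t) := fun s _ =>
    ((hderiv s).continuousAt).continuousWithinAt
  have h := norm_le_gronwallBound_of_norm_deriv_right_le hcont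
    (fun s _ => (hderiv s).hasDerivWithinAt) le_rfl (fun s _ => hbound s) t
    (right_mem_Icc.2 ht)
  rwa [gronwallBound_of_K_ne_0 hL.ne', sub_zero] at h

/-- Master flow-distance estimate, with time direction `e` (|e| = 1) and offset `c`. -/
lemma flow_dist {L D t c e : ℝ} (hL : 0 < L) (ht : 0 ≤ t) (he : |e| = 1)
    {v w : En n → En n} (hvL : ∀ x y, ‖v x - v y‖ ≤ L * ‖x - y‖)
    {Φv Φw : ℝ → En n → En n} (hΦv : IsFlow n v Φv) (hΦw : IsFlow n w Φw)
    (hD : ∀ x, ‖v x - w x‖ ≤ D) (a b : En n) :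
    ‖Φv (c + e * t) a - Φw (c + e * t) b‖ ≤
      ‖Φv c a - Φw c b‖ * Real.exp (L * t) + D / L * (Real.exp (L * t) - 1) := by
  set f : ℝ → En n := fun s => Φv (c + e * s) a - Φw (c + e * s) b with hf
  have hin : ∀ s : ℝ, HasDerivAt (fun s : ℝ => c + e * s) e s := fun s => by
    simpa using ((hasDerivAt_id s).const_mul e).const_add c
  have hd : ∀ s, HasDerivAt f (e • (v (Φv (c + e * s) a) - w (Φw (c + e * s) b))) s := by
    intro s
    have h1 : HasDerivAt (fun s : ℝ => Φv (c + e * s) a) (e • v (Φv (c + e * s) a)) s :=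
      by have := (hΦv.2 a (c + e * s)).scomp s (hin s); exact this
    have h2 : HasDerivAt (fun s : ℝ => Φw (c + e * s) b) (e • w (Φw (c + e * s) b)) s :=
      by have := (hΦw.2 b (c + e * s)).scomp s (hin s); exact this
    exact (h1.sub h2).congr_deriv (by simp [smul_sub])
  have hb : ∀ s, ‖e • (v (Φv (c + e * s) a) - w (Φw (c + e * s) b))‖ ≤ L * ‖f s‖ + D := by
    intro s
    rw [norm_smul, Real.norm_eq_abs, he, one_mul]
    calc ‖v (Φv (c + e * s) a) - w (Φw (c + e * s) b)‖
        ≤ ‖v (Φv (c + e * s) a) - v (Φw (c + e * s) b)‖ +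
          ‖v (Φw (c + e * s) b) - w (Φw (c + e * s) b)‖ := by
          simpa using norm_sub_le_norm_sub_add_norm_sub _ _ _
      _ ≤ L * ‖f s‖ + D := add_le_add (hvL _ _) (hD _)
  have h := gron hL ht hd hb
  simpa [hf] using h

/-- The flow at time `-t` inverts the flow at time `t`. -/
lemma flow_inv {L : ℝ} (hL : 0 < L)
    {v : En n → En n} (hvL : ∀ x y, ‖v x - v y‖ ≤ L * ‖x - y‖)
    {Φ : ℝ → En n → En n} (hΦ : IsFlow n v Φ) (t : ℝ) (x : En n) :
    Φ (-t) (Φ t x) = x := by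
  have hlip : ∀ s : ℝ, LipschitzWith ⟨L, hL.le⟩ v := by
    intro _
    apply LipschitzWith.of_dist_le_mul
    intro a b
    rw [dist_eq_norm, dist_eq_norm]
    exact hvL a b
  have hdf : ∀ s : ℝ, HasDerivAt (fun s : ℝ => Φ (t - s) x) (-(v (Φ (t - s) x))) s := by
    intro s
    have hin : HasDerivAt (fun s : ℝ => t - s) (-1 : ℝ) s := by
      simpa using (hasDerivAt_id s).const_sub t
    have := (hΦ.2 x (t - s)).scomp s hin
    exact this.congr_deriv (by simp [neg_smul])
  have hdg : ∀ s : ℝ, HasDerivAt (fun s : ℝ => Φ (-s) (Φ t x)) (-(v (Φ (-s) (Φ t x)))) s := by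
    intro s
    have := (hΦ.2 (Φ t x) (-s)).scomp s (hasDerivAt_neg s)
    exact this.congr_deriv (by simp [neg_smul])
  have hdh : ∀ s : ℝ, HasDerivAt (fun s : ℝ => Φ (s - t) (Φ t x)) (v (Φ (s - t) (Φ t x))) s := by
    intro s
    have := (hΦ.2 (Φ t x) (s - t)).scomp s ((hasDerivAt_id s).sub_const t)
    exact this.congr_deriv (by simp)
  rcases le_or_gt 0 t with ht | ht
  · have key := ODE_solution_unique (v := fun _ y => -v y) (K := ⟨L, hL.le⟩)
      (f := fun s => Φ (t - s) x) (g := fun s => Φ (-s) (Φ t x)) (a := 0) (b := t)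
      (fun s => (hlip s).neg)
      (fun s _ => ((hdf s).continuousAt).continuousWithinAt)
      (fun s _ => (hdf s).hasDerivWithinAt)
      (fun s _ => ((hdg s).continuousAt).continuousWithinAt)
      (fun s _ => (hdg s).hasDerivWithinAt)
      (by simp [hΦ.1])
    have := key (right_mem_Icc.2 ht)
    simpa [hΦ.1 x] using this.symm
  · have key := ODE_solution_unique (v := fun _ y => v y) (K := ⟨L, hL.le⟩)
      (f := fun s => Φ s x) (g := fun s => Φ (s - t) (Φ t x)) (a := t) (b := 0)
      hlip
      (fun s _ => ((hΦ.2 x s).continuousAt).continuousWithinAt)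
      (fun s _ => (hΦ.2 x s).hasDerivWithinAt)
      (fun s _ => ((hdh s).continuousAt).continuousWithinAt)
      (fun s _ => (hdh s).hasDerivWithinAt)
      (by simp [hΦ.1])
    have := key (right_mem_Icc.2 ht.le)
    simpa [hΦ.1 x] using this.symm

lemma flow_lip {L t e : ℝ} (hL : 0 < L) (ht : 0 ≤ t) (he : |e| = 1)
    {v : En n → En n} (hvL : ∀ x y, ‖v x - v y‖ ≤ L * ‖x - y‖)
    {Φ : ℝ → En n → En n} (hΦ : IsFlow n v Φ) :
    Continuous (Φ (e * t)) := by
  have key : ∀ a b, ‖Φ (e * t) a - Φ (e * t) b‖ ≤ ‖a - b‖ * Real.exp (L * t) := by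
    intro a b
    have h := flow_dist (c := 0) (D := 0) hL ht he hvL hΦ hΦ (fun x => by simp) a b
    simpa [hΦ.1] using h
  have hlip : LipschitzWith (Real.toNNReal (Real.exp (L * t))) (Φ (e * t)) := by
    apply LipschitzWith.of_dist_le_mul
    intro a b
    rw [dist_eq_norm, dist_eq_norm, Real.coe_toNNReal _ (Real.exp_nonneg _)]
    exact (key a b).trans_eq (mul_comm _ _)
  exact hlip.continuous

open scoped ENNReal in
lemma mink {α : Type*} [MeasurableSpace α] (μ : Measure α) {p A B : ℝ} (hp : 1 ≤ p)
    (hA : 0 ≤ A) (hB : 0 ≤ B) {G H : α → ℝ≥0∞} (hG : AEMeasurable G μ)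
    (hHG : ∀ x, H x ≤ ENNReal.ofReal A * G x + ENNReal.ofReal B) :
    (∫⁻ x, H x ^ p ∂μ) ^ (1/p) ≤
      ENNReal.ofReal A * (∫⁻ x, G x ^ p ∂μ) ^ (1/p) +
        ENNReal.ofReal B * (μ univ) ^ (1/p) := by
  have hp0 : 0 < p := lt_of_lt_of_le zero_lt_one hp
  have h1p : (0:ℝ) ≤ 1/p := by positivity
  have h1 : (∫⁻ x, H x ^ p ∂μ) ^ (1/p) ≤
      (∫⁻ x, (((fun x => ENNReal.ofReal A * G x) + (fun _ => ENNReal.ofReal B) : α → ℝ≥0∞)) x ^ p ∂μ) ^ (1/p) := by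
    refine ENNReal.rpow_le_rpow (lintegral_mono fun x => ?_) h1p
    exact ENNReal.rpow_le_rpow (hHG x) hp0.le
  refine h1.trans ?_
  refine (ENNReal.lintegral_Lp_add_le (hG.const_mul _) aemeasurable_const hp).trans ?_
  have hA_ne : (ENNReal.ofReal A) ^ p ≠ ⊤ :=
    ENNReal.rpow_ne_top_of_nonneg hp0.le ENNReal.ofReal_ne_top
  have e1 : (∫⁻ x, (ENNReal.ofReal A * G x) ^ p ∂μ) ^ (1/p) =
      ENNReal.ofReal A * (∫⁻ x, G x ^ p ∂μ) ^ (1/p) := by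
    have : ∀ x, (ENNReal.ofReal A * G x) ^ p = (ENNReal.ofReal A) ^ p * G x ^ p := fun x =>
      ENNReal.mul_rpow_of_nonneg _ _ hp0.le
    simp_rw [this]
    rw [lintegral_const_mul' _ _ hA_ne, ENNReal.mul_rpow_of_nonneg _ _ h1p,
      ← ENNReal.rpow_mul, mul_one_div_cancel hp0.ne', ENNReal.rpow_one]
  have e2 : (∫⁻ _ : α, (ENNReal.ofReal B) ^ p ∂μ) ^ (1/p) =
      ENNReal.ofReal B * (μ univ) ^ (1/p) := by
    rw [lintegral_const, ENNReal.mul_rpow_of_nonneg _ _ h1p,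
      ← ENNReal.rpow_mul, mul_one_div_cancel hp0.ne', ENNReal.rpow_one]
  calc (∫⁻ x, (ENNReal.ofReal A * G x) ^ p ∂μ) ^ (1/p) +
        (∫⁻ _ : α, (ENNReal.ofReal B) ^ p ∂μ) ^ (1/p)
      = _ := by rw [e1, e2]
    _ ≤ _ := le_rfl

end Helpers

/-- As `stmt5` but for finite positive measures with equal total mass `C > 0`
(not necessarily `1`): the second term carries the factor `μ(ℝⁿ)^(1/p)`. -/
theorem stmt6 (n : ℕ) (p L t : ℝ) (hp : 1 ≤ p) (hL : 0 < L) (ht : 0 ≤ t)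
    (v w : En n → En n)
    (hvB : ∃ C : ℝ, ∀ x, ‖v x‖ ≤ C) (hwB : ∃ C : ℝ, ∀ x, ‖w x‖ ≤ C)
    (hvL : ∀ x y, ‖v x - v y‖ ≤ L * ‖x - y‖)
    (hwL : ∀ x y, ‖w x - w y‖ ≤ L * ‖x - y‖)
    (Φv Φw : ℝ → En n → En n) (hΦv : IsFlow n v Φv) (hΦw : IsFlow n w Φw)
    (μ ν : Measure (En n)) (hμ : NiceMeasure n μ) (hν : NiceMeasure n ν)
    (C : ENNReal) (hC : C ≠ 0)
    (hmassμ : μ Set.univ = C) (hmassν : ν Set.univ = C) :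
    Wp n p (Measure.map (Φv t) μ) (Measure.map (Φw t) ν) ≤
      Real.exp ((p + 1) / p * L * t) * Wp n p μ ν +
        (μ Set.univ).toReal ^ (1 / p) *
          (Real.exp (L * t / p) * (Real.exp (L * t) - 1) / L) *
            (⨆ x, ‖v x - w x‖) := by
  haveI : IsFiniteMeasure μ := hμ.1
  obtain ⟨Cv, hCv⟩ := hvB
  obtain ⟨Cw, hCw⟩ := hwB
  have hp0 : 0 < p := lt_of_lt_of_le zero_lt_one hp
  have h1p : (0:ℝ) ≤ 1/p := by positivity
  set D : ℝ := ⨆ x, ‖v x - w x‖ with hD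
  have hbdd : BddAbove (Set.range fun x : En n => ‖v x - w x‖) := by
    refine ⟨Cv + Cw, ?_⟩
    rintro _ ⟨x, rfl⟩
    exact (norm_sub_le _ _).trans (add_le_add (hCv x) (hCw x))
  have hDle : ∀ x, ‖v x - w x‖ ≤ D := fun x => le_ciSup hbdd x
  have hD0 : 0 ≤ D := le_trans (norm_nonneg _) (hDle 0)
  set A : ℝ := Real.exp (L * t) with hA
  have hA0 : 0 < A := Real.exp_pos _
  have hA1 : 1 ≤ A := Real.one_le_exp (by positivity)
  set B : ℝ := D / L * (A - 1) with hB
  have hB0 : 0 ≤ B := mul_nonneg (div_nonneg hD0 hL.le) (by linarith)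
  set A' : ℝ := Real.exp ((p + 1) / p * L * t) with hA'
  have hA'0 : 0 < A' := Real.exp_pos _
  have hAA' : A ≤ A' := by
    rw [hA, hA']
    apply Real.exp_le_exp.2
    have h1 : (1:ℝ) ≤ (p+1)/p := by rw [le_div_iff₀ hp0]; linarith
    nlinarith [mul_nonneg hL.le ht]
  set M : ℝ := (μ Set.univ).toReal ^ (1/p) with hM
  have hM0 : 0 ≤ M := Real.rpow_nonneg ENNReal.toReal_nonneg _
  set B' : ℝ := M * (Real.exp (L * t / p) * (A - 1) / L) * D with hB'
  have hBM : B * M ≤ B' := by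
    have hE : (A - 1)/L ≤ Real.exp (L*t/p) * (A-1)/L := by
      rw [mul_div_assoc]
      exact le_mul_of_one_le_left (div_nonneg (by linarith) hL.le)
        (Real.one_le_exp (by positivity))
    calc B * M = M * ((A-1)/L) * D := by rw [hB]; ring
      _ ≤ M * (Real.exp (L*t/p) * (A-1)/L) * D :=
        mul_le_mul_of_nonneg_right (mul_le_mul_of_nonneg_left hE hM0) hD0
      _ = B' := by rw [hB']
  have hB'0 : 0 ≤ B' := le_trans (mul_nonneg hB0 hM0) hBM
  have hcvt : Continuous (Φv t) := by
    simpa using flow_lip (e := 1) hL ht (by norm_num) hvL hΦv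
  have hcvn : Continuous (Φv (-t)) := by
    simpa using flow_lip (e := -1) hL ht (by norm_num) hvL hΦv
  have hcwt : Continuous (Φw t) := by
    simpa using flow_lip (e := 1) hL ht (by norm_num) hwL hΦw
  have hcwn : Continuous (Φw (-t)) := by
    simpa using flow_lip (e := -1) hL ht (by norm_num) hwL hΦw
  have hinvv : ∀ x, Φv (-t) (Φv t x) = x := flow_inv hL hvL hΦv t
  have helem : ∀ (μ' : Measure (En n)) (γ : En n → En n),
      0 ≤ (∫ x, ‖γ x - x‖ ^ p ∂μ') ^ (1/p) := fun μ' γ =>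
    Real.rpow_nonneg (integral_nonneg fun x => Real.rpow_nonneg (norm_nonneg _) _) _
  set S : Set ℝ := {c : ℝ | ∃ γ : En n → En n, Measurable γ ∧ Measure.map γ μ = ν ∧
    c = (∫ x, ‖γ x - x‖ ^ p ∂μ) ^ (1/p)} with hSdef
  set S' : Set ℝ := {c : ℝ | ∃ γ : En n → En n, Measurable γ ∧
    Measure.map γ (Measure.map (Φv t) μ) = Measure.map (Φw t) ν ∧
    c = (∫ x, ‖γ x - x‖ ^ p ∂(Measure.map (Φv t) μ)) ^ (1/p)} with hS'def
  have hWpS : Wp n p μ ν = sInf S := rfl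
  have hWpS' : Wp n p (Measure.map (Φv t) μ) (Measure.map (Φw t) ν) = sInf S' := rfl
  rw [hWpS', hWpS]
  have hbb : BddBelow S' := by
    refine ⟨0, ?_⟩
    rintro c ⟨γ, _, _, rfl⟩
    exact helem _ γ
  rcases Set.eq_empty_or_nonempty S' with hemp | ⟨c₀, hc₀⟩
  · rw [hemp, Real.sInf_empty]
    have hWnn : 0 ≤ sInf S := by
      apply Real.sInf_nonneg
      rintro c ⟨γ, _, _, rfl⟩
      exact helem _ γ
    exact add_nonneg (mul_nonneg hA'0.le hWnn) hB'0
  obtain ⟨γ₀, hγ₀m, hγ₀p, -⟩ := hc₀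
  have hSne : S.Nonempty := by
    refine ⟨_, fun x => Φw (-t) (γ₀ (Φv t x)), hcwn.measurable.comp
      (hγ₀m.comp hcvt.measurable), ?_, rfl⟩
    have h1 : Measure.map (fun x => Φw (-t) (γ₀ (Φv t x))) μ
        = Measure.map (Φw (-t)) (Measure.map γ₀ (Measure.map (Φv t) μ)) := by
      rw [Measure.map_map hγ₀m hcvt.measurable,
        Measure.map_map hcwn.measurable (hγ₀m.comp hcvt.measurable)]
      rfl
    rw [h1, hγ₀p, Measure.map_map hcwn.measurable hcwt.measurable]
    have h2 : (Φw (-t)) ∘ (Φw t) = id := funext fun x => flow_inv hL hwL hΦw t x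
    rw [h2, Measure.map_id]
  have key : ∀ c ∈ S, sInf S' ≤ A' * c + B' := by
    rintro c ⟨γ, hγm, hγp, rfl⟩
    have hγ'm : Measurable (fun y => Φw t (γ (Φv (-t) y))) :=
      hcwt.measurable.comp (hγm.comp hcvn.measurable)
    have hpush : Measure.map (fun y => Φw t (γ (Φv (-t) y))) (Measure.map (Φv t) μ)
        = Measure.map (Φw t) ν := by
      rw [Measure.map_map hγ'm hcvt.measurable]
      have h3 : (fun y => Φw t (γ (Φv (-t) y))) ∘ (Φv t) = (Φw t) ∘ γ :=
        funext fun x => by simp [Function.comp, hinvv x]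
      rw [h3, ← Measure.map_map hcwt.measurable hγm, hγp]
    have hstep1 : sInf S' ≤
        (∫ y, ‖Φw t (γ (Φv (-t) y)) - y‖ ^ p ∂(Measure.map (Φv t) μ)) ^ (1/p) :=
      csInf_le hbb ⟨_, hγ'm, hpush, rfl⟩
    have hmeas_h : Measurable fun x => ‖Φw t (γ x) - Φv t x‖ :=
      ((hcwt.measurable.comp hγm).sub hcvt.measurable).norm
    have hmeas_g : Measurable fun x : En n => ‖γ x - x‖ := (hγm.sub measurable_id).norm
    have hmap : (∫ y, ‖Φw t (γ (Φv (-t) y)) - y‖ ^ p ∂(Measure.map (Φv t) μ))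
        = ∫ x, ‖Φw t (γ x) - Φv t x‖ ^ p ∂μ := by
      have hsm : Measurable (fun y => ‖Φw t (γ (Φv (-t) y)) - y‖ ^ p) :=
        (hγ'm.sub measurable_id).norm.pow measurable_const
      rw [integral_map hcvt.measurable.aemeasurable hsm.aestronglyMeasurable]
      exact integral_congr_ae (Filter.Eventually.of_forall fun x => by simp [hinvv x])
    have est1 : ∀ x : En n, ‖Φw t (γ x) - Φv t x‖ ≤ A * ‖γ x - x‖ + B := by
      intro x
      have h := flow_dist (c := 0) (e := 1) hL ht (by norm_num) hwL hΦw hΦv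
        (fun y => by rw [norm_sub_rev]; exact hDle y) (γ x) x
      simp only [zero_add, one_mul, hΦv.1, hΦw.1] at h
      rw [hA, hB]
      linarith [mul_comm (Real.exp (L * t)) ‖γ x - x‖]
    have est2 : ∀ x : En n, ‖γ x - x‖ ≤ A * ‖Φw t (γ x) - Φv t x‖ + B := by
      intro x
      have h := flow_dist (c := t) (e := -1) hL ht (by norm_num) hwL hΦw hΦv
        (fun y => by rw [norm_sub_rev]; exact hDle y) (γ x) x
      have ht0 : t + -1 * t = 0 := by ring
      rw [ht0, hΦv.1, hΦw.1] at h
      rw [hA, hB]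
      linarith [mul_comm (Real.exp (L * t)) ‖Φw t (γ x) - Φv t x‖]
    have hGm : Measurable fun x => ENNReal.ofReal ‖γ x - x‖ := hmeas_g.ennreal_ofReal
    have hHm : Measurable fun x => ENNReal.ofReal ‖Φw t (γ x) - Φv t x‖ :=
      hmeas_h.ennreal_ofReal
    have hint_h : ∫ x, ‖Φw t (γ x) - Φv t x‖ ^ p ∂μ
        = (∫⁻ x, (ENNReal.ofReal ‖Φw t (γ x) - Φv t x‖) ^ p ∂μ).toReal := by
      rw [integral_eq_lintegral_of_nonneg_ae
        (Filter.Eventually.of_forall fun x => Real.rpow_nonneg (norm_nonneg _) _)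
        ((hmeas_h.pow measurable_const).aestronglyMeasurable)]
      congr 1
      exact lintegral_congr fun x => (ENNReal.ofReal_rpow_of_nonneg (norm_nonneg _) hp0.le).symm
    have hint_g : ∫ x, ‖γ x - x‖ ^ p ∂μ
        = (∫⁻ x, (ENNReal.ofReal ‖γ x - x‖) ^ p ∂μ).toReal := by
      rw [integral_eq_lintegral_of_nonneg_ae
        (Filter.Eventually.of_forall fun x => Real.rpow_nonneg (norm_nonneg _) _)
        ((hmeas_g.pow measurable_const).aestronglyMeasurable)]
      congr 1
      exact lintegral_congr fun x => (ENNReal.ofReal_rpow_of_nonneg (norm_nonneg _) hp0.le).symm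
    have hMk1 : (∫⁻ x, (ENNReal.ofReal ‖Φw t (γ x) - Φv t x‖) ^ p ∂μ) ^ (1/p) ≤
        ENNReal.ofReal A * (∫⁻ x, (ENNReal.ofReal ‖γ x - x‖) ^ p ∂μ) ^ (1/p) +
          ENNReal.ofReal B * (μ Set.univ) ^ (1/p) := by
      refine mink μ hp hA0.le hB0 hGm.aemeasurable fun x => ?_
      calc ENNReal.ofReal ‖Φw t (γ x) - Φv t x‖
          ≤ ENNReal.ofReal (A * ‖γ x - x‖ + B) := ENNReal.ofReal_le_ofReal (est1 x)
        _ = ENNReal.ofReal A * ENNReal.ofReal ‖γ x - x‖ + ENNReal.ofReal B := by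
            rw [ENNReal.ofReal_add (mul_nonneg hA0.le (norm_nonneg _)) hB0,
              ENNReal.ofReal_mul hA0.le]
    have hMk2 : (∫⁻ x, (ENNReal.ofReal ‖γ x - x‖) ^ p ∂μ) ^ (1/p) ≤
        ENNReal.ofReal A * (∫⁻ x, (ENNReal.ofReal ‖Φw t (γ x) - Φv t x‖) ^ p ∂μ) ^ (1/p) +
          ENNReal.ofReal B * (μ Set.univ) ^ (1/p) := by
      refine mink μ hp hA0.le hB0 hHm.aemeasurable fun x => ?_
      calc ENNReal.ofReal ‖γ x - x‖
          ≤ ENNReal.ofReal (A * ‖Φw t (γ x) - Φv t x‖ + B) :=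
            ENNReal.ofReal_le_ofReal (est2 x)
        _ = ENNReal.ofReal A * ENNReal.ofReal ‖Φw t (γ x) - Φv t x‖ + ENNReal.ofReal B := by
            rw [ENNReal.ofReal_add (mul_nonneg hA0.le (norm_nonneg _)) hB0,
              ENNReal.ofReal_mul hA0.le]
    rcases eq_or_ne (∫⁻ x, (ENNReal.ofReal ‖Φw t (γ x) - Φv t x‖) ^ p ∂μ) ⊤ with hIh | hIh
    · have hz : (∫ y, ‖Φw t (γ (Φv (-t) y)) - y‖ ^ p ∂(Measure.map (Φv t) μ)) ^ (1/p) = 0 := by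
        rw [hmap, hint_h, hIh, ENNReal.toReal_top, Real.zero_rpow (one_div_ne_zero hp0.ne')]
      refine (hstep1.trans_eq hz).trans ?_
      exact add_nonneg (mul_nonneg hA'0.le (helem μ γ)) hB'0
    · have hIg : (∫⁻ x, (ENNReal.ofReal ‖γ x - x‖) ^ p ∂μ) ≠ ⊤ := by
        intro htop
        rw [htop, ENNReal.top_rpow_of_pos (by positivity)] at hMk2
        have hne : ENNReal.ofReal A *
            (∫⁻ x, (ENNReal.ofReal ‖Φw t (γ x) - Φv t x‖) ^ p ∂μ) ^ (1/p) +
            ENNReal.ofReal B * (μ Set.univ) ^ (1/p) ≠ ⊤ := by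
          apply ENNReal.add_ne_top.2
          exact ⟨ENNReal.mul_ne_top ENNReal.ofReal_ne_top
              (ENNReal.rpow_ne_top_of_nonneg h1p hIh),
            ENNReal.mul_ne_top ENNReal.ofReal_ne_top
              (ENNReal.rpow_ne_top_of_nonneg h1p (measure_ne_top μ _))⟩
        exact hne (top_le_iff.1 hMk2)
      have hm1 : ENNReal.ofReal A *
          (∫⁻ x, (ENNReal.ofReal ‖γ x - x‖) ^ p ∂μ) ^ (1/p) ≠ ⊤ :=
        ENNReal.mul_ne_top ENNReal.ofReal_ne_top (ENNReal.rpow_ne_top_of_nonneg h1p hIg)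
      have hm2 : ENNReal.ofReal B * (μ Set.univ) ^ (1/p) ≠ ⊤ :=
        ENNReal.mul_ne_top ENNReal.ofReal_ne_top
          (ENNReal.rpow_ne_top_of_nonneg h1p (measure_ne_top μ _))
      have hreal := ENNReal.toReal_mono (ENNReal.add_ne_top.2 ⟨hm1, hm2⟩) hMk1
      rw [ENNReal.toReal_add hm1 hm2, ENNReal.toReal_mul, ENNReal.toReal_mul,
        ENNReal.toReal_ofReal hA0.le, ENNReal.toReal_ofReal hB0,
        ← ENNReal.toReal_rpow, ← ENNReal.toReal_rpow, ← ENNReal.toReal_rpow, ← hM] at hreal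
      refine hstep1.trans ?_
      rw [hmap, hint_h, hint_g]
      calc (∫⁻ x, (ENNReal.ofReal ‖Φw t (γ x) - Φv t x‖) ^ p ∂μ).toReal ^ (1/p)
          ≤ A * (∫⁻ x, (ENNReal.ofReal ‖γ x - x‖) ^ p ∂μ).toReal ^ (1/p) + B * M := hreal
        _ ≤ A' * (∫⁻ x, (ENNReal.ofReal ‖γ x - x‖) ^ p ∂μ).toReal ^ (1/p) + B' :=
            add_le_add (mul_le_mul_of_nonneg_right hAA'
              (Real.rpow_nonneg ENNReal.toReal_nonneg _)) hBM
  have h1 : (sInf S' - B') / A' ≤ sInf S := by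
    apply le_csInf hSne
    intro c hc
    rw [div_le_iff₀ hA'0]
    have h2 := key c hc
    have hcc : 0 ≤ c := by obtain ⟨γ, _, _, rfl⟩ := hc; exact helem _ γ
    linarith [mul_comm c A']
  rw [div_le_iff₀ hA'0] at h1
  linarith [mul_comm (sInf S) A']


end
end

section
/- Let p ≥ 1, let v satisfy hypothesis (H) with constants L, K, and let μ₀, ν₀ ∈ M. Let μ^k and ν^k be constructed by Scheme 1 with time step Δt = T/2^k starting from μ₀ and ν₀ respectively. Then d(μ^k, ν^k) ≤ ( e^{((p+1)/p) L Δt} + e^{L Δt / p} (e^{L Δt} − 1) K / L )^{2^k} · W_p(μ₀, ν₀), where d(μ,ν) = sup_{t∈[0,T]} W_p(μ_t, ν_t). -/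
open MeasureTheory Set
open scoped RealInnerProductSpace

noncomputable section

open scoped NNReal ENNReal

namespace Stmt10Aux

variable {n : ℕ}

/-- The set of Monge transport costs. -/
def TSet (n : ℕ) (p : ℝ) (μ ν : Measure (En n)) : Set ℝ :=
  { c : ℝ | ∃ γ : En n → En n, Measurable γ ∧ Measure.map γ μ = ν ∧
    c = (∫ x, ‖γ x - x‖ ^ p ∂μ) ^ (1 / p) }

theorem Wp_eq (p : ℝ) (μ ν : Measure (En n)) : Wp n p μ ν = sInf (TSet n p μ ν) := rfl

theorem TSet_nonneg {p : ℝ} {μ ν : Measure (En n)} {c : ℝ} (hc : c ∈ TSet n p μ ν) :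
    0 ≤ c := by
  obtain ⟨γ, -, -, rfl⟩ := hc
  exact Real.rpow_nonneg
    (integral_nonneg fun x => Real.rpow_nonneg (norm_nonneg _) p) _

theorem TSet_bddBelow (p : ℝ) (μ ν : Measure (En n)) : BddBelow (TSet n p μ ν) :=
  ⟨0, fun _ hc => TSet_nonneg hc⟩

theorem Wp_nonneg (p : ℝ) (μ ν : Measure (En n)) : 0 ≤ Wp n p μ ν :=
  Real.sInf_nonneg fun _ hc => TSet_nonneg hc

/-- Lipschitz maps of `ℝⁿ` send Lebesgue-null sets to Lebesgue-null sets. -/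
theorem lipschitz_image_null {f : En n → En n} {C : ℝ≥0} (hf : LipschitzWith C f)
    {A : Set (En n)} (hA : volume A = 0) : volume (f '' A) = 0 := by
  set e := (MeasurableEquiv.toLp 2 (Fin n → ℝ)).symm with he_def
  have hvol : MeasurePreserving e volume volume :=
    EuclideanSpace.volume_preserving_symm_measurableEquiv_toLp (Fin n)
  have hvols : MeasurePreserving e.symm volume volume := hvol.symm e
  have he : LipschitzWith 1 (⇑e) := by
    rw [he_def, MeasurableEquiv.coe_toLp_symm]
    exact PiLp.lipschitzWith_ofLp 2 _
  obtain ⟨Ce, hes⟩ : ∃ Ce : ℝ≥0, LipschitzWith Ce (⇑e.symm) := by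
    rw [he_def, MeasurableEquiv.symm_symm, MeasurableEquiv.coe_toLp]
    exact ⟨_, PiLp.lipschitzWith_toLp 2 (fun _ : Fin n => ℝ)⟩
  have himg : ∀ S : Set (En n), ⇑e '' S = ⇑e.symm ⁻¹' S := by
    intro S
    rw [Set.image_eq_preimage_of_inverse (g := ⇑e.symm) (fun x => by simp) (fun x => by simp)]
  have hS : volume (⇑e.symm ⁻¹' A) = 0 :=
    hvols.quasiMeasurePreserving.preimage_null hA
  set F : (Fin n → ℝ) → (Fin n → ℝ) := ⇑e ∘ f ∘ ⇑e.symm with hF_def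
  have hF : LipschitzWith (1 * (C * Ce)) F := he.comp (hf.comp hes)
  have hHvol : (μH[(n : ℝ)] : Measure (Fin n → ℝ)) = volume := by
    have := MeasureTheory.hausdorffMeasure_pi_real (ι := Fin n)
    simpa [Fintype.card_fin] using this
  have hHle := hF.hausdorffMeasure_image_le (by positivity : (0:ℝ) ≤ (n : ℝ)) (⇑e '' A)
  rw [hHvol] at hHle
  have hFnull : volume (F '' (⇑e '' A)) = 0 := by
    refine le_antisymm (hHle.trans ?_) zero_le
    rw [himg A, hS, mul_zero]
  have h5 : ⇑e.symm '' (⇑e '' A) = A := by ext x; simp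
  have hFeq : F '' (⇑e '' A) = ⇑e '' (f '' A) := by
    rw [hF_def, Set.image_comp, Set.image_comp, h5]
  rw [hFeq, himg (f '' A)] at hFnull
  have := hvol.quasiMeasurePreserving.preimage_null hFnull
  have hpre : ⇑e ⁻¹' (⇑e.symm ⁻¹' (f '' A)) = f '' A := by
    ext x; simp
  rwa [hpre] at this

/-- `MemM` is preserved by push-forward under a Lipschitz map with a Lipschitz
left inverse. -/
theorem memM_map {μi : Measure (En n)} (h : MemM n μi) {f g : En n → En n}
    {Cf Cg : ℝ≥0} (hf : LipschitzWith Cf f) (hg : LipschitzWith Cg g)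
    (hinv : ∀ x, g (f x) = x) : MemM n (Measure.map f μi) := by
  obtain ⟨hP, hAC, Kc, hKc, hKnull⟩ := h
  have hfm : Measurable f := hf.continuous.measurable
  refine ⟨Measure.isProbabilityMeasure_map hfm.aemeasurable, ?_,
    f '' Kc, hKc.image hf.continuous, ?_⟩
  · intro A hA
    obtain ⟨D, hAD, hDm, hD0⟩ := exists_measurable_superset_of_null hA
    have h1 : Measure.map f μi A ≤ Measure.map f μi D := measure_mono hAD
    rw [Measure.map_apply hfm hDm] at h1
    have h2 : f ⁻¹' D ⊆ g '' D := fun x hx => ⟨f x, hx, hinv x⟩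
    have h3 : volume (g '' D) = 0 := lipschitz_image_null hg hD0
    have h4 : μi (g '' D) = 0 := hAC h3
    exact le_antisymm (h1.trans ((measure_mono h2).trans h4.le)) zero_le
  · rw [Measure.map_apply hfm (hKc.image hf.continuous).isClosed.measurableSet.compl]
    refine le_antisymm (le_trans (measure_mono ?_) hKnull.le) zero_le
    intro x hx
    intro hmem
    exact hx (mem_image_of_mem f hmem)

/-- Global two-sided uniqueness for an autonomous Lipschitz ODE. -/
theorem ode_unique {w : En n → En n} {C : ℝ≥0} (hw : LipschitzWith C w)
    {f g : ℝ → En n} (hf : ∀ t, HasDerivAt f (w (f t)) t)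
    (hg : ∀ t, HasDerivAt g (w (g t)) t) {t₀ : ℝ} (h0 : f t₀ = g t₀) (t : ℝ) :
    f t = g t := by
  have h1 : t₀ ∈ Ioo (min t₀ t - 1) (max t₀ t + 1) :=
    ⟨by nlinarith [min_le_left t₀ t], by nlinarith [le_max_left t₀ t]⟩
  have h2 : t ∈ Icc (min t₀ t - 1) (max t₀ t + 1) :=
    ⟨by nlinarith [min_le_right t₀ t], by nlinarith [le_max_right t₀ t]⟩
  exact ODE_solution_unique_of_mem_Icc (v := fun _ x => w x) (s := fun _ => univ)
    (fun _ _ => hw.lipschitzOnWith)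
    h1
    (continuousOn_of_forall_continuousAt fun u _ => (hf u).continuousAt)
    (fun u _ => hf u) (fun u _ => trivial)
    (continuousOn_of_forall_continuousAt fun u _ => (hg u).continuousAt)
    (fun u _ => hg u) (fun u _ => trivial)
    h0 h2

theorem isFlow_add {w : En n → En n} {Φ : ℝ → En n → En n} (hΦ : IsFlow n w Φ)
    {C : ℝ≥0} (hw : LipschitzWith C w) (a s : ℝ) (x : En n) :
    Φ (a + s) x = Φ a (Φ s x) := by
  have hf : ∀ t : ℝ, HasDerivAt (fun u => Φ (u + s) x) (w (Φ (t + s) x)) t := by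
    intro t
    have h := (hΦ.2 x (t + s)).scomp t ((hasDerivAt_id t).add_const s)
    simpa [Function.comp_def] using h
  have hg : ∀ t : ℝ, HasDerivAt (fun u => Φ u (Φ s x)) (w (Φ t (Φ s x))) t :=
    fun t => hΦ.2 (Φ s x) t
  have h0 : Φ (0 + s) x = Φ 0 (Φ s x) := by rw [zero_add, hΦ.1]
  exact ode_unique hw hf hg (t₀ := 0) h0 a

theorem isFlow_inv_left {w : En n → En n} {Φ : ℝ → En n → En n} (hΦ : IsFlow n w Φ)
    {C : ℝ≥0} (hw : LipschitzWith C w) (s : ℝ) (x : En n) :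
    Φ (-s) (Φ s x) = x := by
  have := isFlow_add hΦ hw (-s) s x
  rw [neg_add_cancel, hΦ.1] at this
  exact this.symm

theorem isFlow_inv_right {w : En n → En n} {Φ : ℝ → En n → En n} (hΦ : IsFlow n w Φ)
    {C : ℝ≥0} (hw : LipschitzWith C w) (s : ℝ) (x : En n) :
    Φ s (Φ (-s) x) = x := by
  have := isFlow_add hΦ hw s (-s) x
  rw [add_neg_cancel, hΦ.1] at this
  exact this.symm

theorem isFlow_dist_le {w : En n → En n} {Φ : ℝ → En n → En n} (hΦ : IsFlow n w Φ)
    {C : ℝ≥0} (hw : LipschitzWith C w) (t : ℝ) (x y : En n) :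
    dist (Φ t x) (Φ t y) ≤ dist x y * Real.exp (C * |t|) := by
  rcases le_or_gt 0 t with h | h
  · have := dist_le_of_trajectories_ODE (v := fun _ z => w z) (K := C)
      (f := fun u => Φ u x) (g := fun u => Φ u y) (a := 0) (b := t)
      (fun _ => hw)
      (continuousOn_of_forall_continuousAt fun u _ => (hΦ.2 x u).continuousAt)
      (fun u _ => (hΦ.2 x u).hasDerivWithinAt)
      (continuousOn_of_forall_continuousAt fun u _ => (hΦ.2 y u).continuousAt)
      (fun u _ => (hΦ.2 y u).hasDerivWithinAt)
      (by simp only [hΦ.1]; exact le_refl _) t ⟨h, le_refl t⟩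
    rw [abs_of_nonneg h]
    simpa using this
  · have hneg : LipschitzWith C (fun z => -(w z)) := by
      have := (LipschitzWith.id (α := En n)).neg.comp hw
      simpa [Function.comp_def] using this
    have hf : ∀ u : ℝ, HasDerivAt (fun u => Φ (-u) x) (-(w (Φ (-u) x))) u := by
      intro u
      have := (hΦ.2 x (-u)).scomp u ((hasDerivAt_id u).neg)
      simpa [Function.comp_def] using this
    have hfy : ∀ u : ℝ, HasDerivAt (fun u => Φ (-u) y) (-(w (Φ (-u) y))) u := by
      intro u
      have := (hΦ.2 y (-u)).scomp u ((hasDerivAt_id u).neg)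
      simpa [Function.comp_def] using this
    have := dist_le_of_trajectories_ODE (v := fun _ z => -(w z)) (K := C)
      (f := fun u => Φ (-u) x) (g := fun u => Φ (-u) y) (a := 0) (b := -t)
      (fun _ => hneg)
      (continuousOn_of_forall_continuousAt fun u _ => (hf u).continuousAt)
      (fun u _ => (hf u).hasDerivWithinAt)
      (continuousOn_of_forall_continuousAt fun u _ => (hfy u).continuousAt)
      (fun u _ => (hfy u).hasDerivWithinAt)
      (by simp only [neg_zero, hΦ.1]; exact le_refl _) (-t) ⟨by linarith, le_refl _⟩
    rw [abs_of_neg h]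
    simpa using this

theorem isFlow_lipschitzWith {w : En n → En n} {Φ : ℝ → En n → En n} (hΦ : IsFlow n w Φ)
    {C : ℝ≥0} (hw : LipschitzWith C w) (t : ℝ) :
    LipschitzWith (Real.exp (C * |t|)).toNNReal (Φ t) :=
  LipschitzWith.of_dist_le_mul fun x y => by
    rw [Real.coe_toNNReal _ (Real.exp_nonneg _), mul_comm]
    exact isFlow_dist_le hΦ hw t x y

theorem flows_dist {w₁ w₂ : En n → En n} {Φ Ψ : ℝ → En n → En n}
    (hΦ : IsFlow n w₁ Φ) (hΨ : IsFlow n w₂ Ψ) {C : ℝ≥0} (hC : (C : ℝ) ≠ 0)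
    (hw₁ : LipschitzWith C w₁) {ε : ℝ}
    (hve : ∀ z, ‖w₁ z - w₂ z‖ ≤ ε) {s : ℝ} (hs : 0 ≤ s) (x y : En n) :
    dist (Φ s x) (Ψ s y) ≤
      dist x y * Real.exp (C * s) + ε / C * (Real.exp (C * s) - 1) := by
  have := dist_le_of_approx_trajectories_ODE (v := fun _ z => w₁ z) (K := C)
    (f := fun u => Φ u x) (g := fun u => Ψ u y)
    (f' := fun u => w₁ (Φ u x)) (g' := fun u => w₂ (Ψ u y))
    (a := 0) (b := s) (εf := 0) (εg := ε) (δ := dist x y)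
    (fun _ => hw₁)
    (continuousOn_of_forall_continuousAt fun u _ => (hΦ.2 x u).continuousAt)
    (fun u _ => (hΦ.2 x u).hasDerivWithinAt)
    (fun u _ => by simp)
    (continuousOn_of_forall_continuousAt fun u _ => (hΨ.2 y u).continuousAt)
    (fun u _ => (hΨ.2 y u).hasDerivWithinAt)
    (fun u _ => by rw [dist_eq_norm, norm_sub_rev]; exact hve _)
    (by simp only [hΦ.1, hΨ.1]; exact le_refl _) s ⟨hs, le_refl s⟩
  rwa [sub_zero, zero_add, gronwallBound_of_K_ne_0 hC] at this


theorem step_estimate {p : ℝ} (hp : 1 ≤ p) {L ε : ℝ} (hL : 0 < L) (hε : 0 ≤ ε)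
    {w₁ w₂ : En n → En n}
    (hw₁ : ∀ x y, ‖w₁ x - w₁ y‖ ≤ L * ‖x - y‖)
    (hw₂ : ∀ x y, ‖w₂ x - w₂ y‖ ≤ L * ‖x - y‖)
    (hve : ∀ z, ‖w₁ z - w₂ z‖ ≤ ε)
    {μi νi : Measure (En n)} (hμP : IsProbabilityMeasure μi)
    (hνP : IsProbabilityMeasure νi)
    {Kμ Kν : Set (En n)} (hKμ : IsCompact Kμ) (hμK : μi Kμᶜ = 0)
    (hKν : IsCompact Kν) (hνK : νi Kνᶜ = 0)
    {Φ Ψ : ℝ → En n → En n} (hΦ : IsFlow n w₁ Φ) (hΨ : IsFlow n w₂ Ψ)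
    {s : ℝ} (hs : 0 ≤ s) :
    Wp n p (Measure.map (Φ s) μi) (Measure.map (Ψ s) νi) ≤
      Real.exp (L * s) * Wp n p μi νi + ε * (Real.exp (L * s) - 1) / L := by
  have hp0 : 0 < p := lt_of_lt_of_le one_pos hp
  set C : ℝ≥0 := L.toNNReal with hC_def
  have hC : (C : ℝ) = L := Real.coe_toNNReal _ hL.le
  have hCne : (C : ℝ) ≠ 0 := by rw [hC]; exact hL.ne'
  have hw₁' : LipschitzWith C w₁ := LipschitzWith.of_dist_le_mul fun x y => by
    rw [dist_eq_norm, dist_eq_norm, hC]; exact hw₁ x y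
  have hw₂' : LipschitzWith C w₂ := LipschitzWith.of_dist_le_mul fun x y => by
    rw [dist_eq_norm, dist_eq_norm, hC]; exact hw₂ x y
  have hΦm : ∀ t : ℝ, Measurable (Φ t) :=
    fun t => (isFlow_lipschitzWith hΦ hw₁' t).continuous.measurable
  have hΨm : ∀ t : ℝ, Measurable (Ψ t) :=
    fun t => (isFlow_lipschitzWith hΨ hw₂' t).continuous.measurable
  set A := Real.exp (L * s) with hA_def
  have hA0 : 0 < A := Real.exp_pos _
  have hA1 : 1 ≤ A := Real.one_le_exp (by positivity)
  set B := ε * (A - 1) / L with hB_def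
  have hB0 : 0 ≤ B := div_nonneg (mul_nonneg hε (by linarith)) hL.le
  have key : ∀ y z : En n, ‖Ψ s z - Φ s y‖ ≤ A * ‖z - y‖ + B := by
    intro y z
    have h := flows_dist hΦ hΨ hCne hw₁' hve hs y z
    rw [dist_eq_norm, dist_eq_norm, hC] at h
    calc ‖Ψ s z - Φ s y‖ = ‖Φ s y - Ψ s z‖ := norm_sub_rev _ _
      _ ≤ ‖y - z‖ * A + ε / L * (A - 1) := by rw [← hA_def] at h; exact h
      _ = A * ‖z - y‖ + B := by rw [norm_sub_rev, hB_def]; ring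
  by_cases hne : (TSet n p μi νi).Nonempty
  · -- main branch
    have main : ∀ c ∈ TSet n p μi νi,
        Wp n p (Measure.map (Φ s) μi) (Measure.map (Ψ s) νi) ≤ A * c + B := by
      rintro c ⟨γ, hγ, hγmap, rfl⟩
      set cval := (∫ x, ‖γ x - x‖ ^ p ∂μi) ^ (1 / p) with hc_def
      have hcval0 : 0 ≤ cval :=
        Real.rpow_nonneg
          (integral_nonneg fun x => Real.rpow_nonneg (norm_nonneg _) p) _
      set T : En n → En n := fun x => Ψ s (γ (Φ (-s) x)) with hT_def
      have hT : Measurable T := (hΨm s).comp (hγ.comp (hΦm (-s)))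
      have hTmap : Measure.map T (Measure.map (Φ s) μi) = Measure.map (Ψ s) νi := by
        rw [Measure.map_map hT (hΦm s)]
        have e1 : T ∘ Φ s = Ψ s ∘ γ := funext fun y => by
          simp only [hT_def, Function.comp_apply, isFlow_inv_left hΦ hw₁' s y]
        rw [e1, ← Measure.map_map (hΨm s) hγ, hγmap]
      obtain ⟨Rμ, hRμ⟩ := hKμ.isBounded.exists_norm_le
      obtain ⟨Rν, hRν⟩ := hKν.isBounded.exists_norm_le
      have haey : ∀ᵐ y ∂μi, y ∈ Kμ := by rw [ae_iff]; exact hμK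
      have haez : ∀ᵐ y ∂μi, γ y ∈ Kν := by
        rw [ae_iff]
        have h0 : μi (γ ⁻¹' Kνᶜ) = 0 := by
          rw [← Measure.map_apply hγ hKν.isClosed.measurableSet.compl, hγmap]
          exact hνK
        exact h0
      have hgbd : ∀ᵐ y ∂μi, ‖γ y - y‖ ≤ Rν + Rμ := by
        filter_upwards [haey, haez] with y h1 h2
        calc ‖γ y - y‖ ≤ ‖γ y‖ + ‖y‖ := norm_sub_le _ _
          _ ≤ Rν + Rμ := add_le_add (hRν _ h2) (hRμ _ h1)
      set X : ℝ≥0∞ := ∫⁻ y, ENNReal.ofReal ‖γ y - y‖ ^ p ∂μi with hX_def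
      have hXfin : X ≠ ⊤ := by
        have hle : X ≤ ENNReal.ofReal (Rν + Rμ) ^ p := by
          rw [hX_def]
          calc ∫⁻ y, ENNReal.ofReal ‖γ y - y‖ ^ p ∂μi
              ≤ ∫⁻ _, ENNReal.ofReal (Rν + Rμ) ^ p ∂μi :=
                lintegral_mono_ae (hgbd.mono fun y h =>
                  ENNReal.rpow_le_rpow (ENNReal.ofReal_le_ofReal h) hp0.le)
            _ = ENNReal.ofReal (Rν + Rμ) ^ p := by
                rw [lintegral_const, measure_univ, mul_one]
        exact ne_top_of_le_ne_top
          (ENNReal.rpow_ne_top_of_nonneg hp0.le ENNReal.ofReal_ne_top) hle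
      have hYX : (∫⁻ x, ENNReal.ofReal (‖γ x - x‖ ^ p) ∂μi) = X := by
        rw [hX_def]
        exact lintegral_congr fun y => by
          rw [ENNReal.ofReal_rpow_of_nonneg (norm_nonneg _) hp0.le]
      have hcX : cval = (X ^ (1 / p)).toReal := by
        have hsm : AEStronglyMeasurable (fun x : En n => ‖γ x - x‖ ^ p) μi :=
          (((hγ.sub measurable_id).norm.pow measurable_const :
            Measurable fun x : En n => ‖γ x - x‖ ^ p)).aestronglyMeasurable
        have hint := integral_eq_lintegral_of_nonneg_ae
          (μ := μi) (f := fun x : En n => ‖γ x - x‖ ^ p)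
          (Filter.Eventually.of_forall fun x => Real.rpow_nonneg (norm_nonneg _) p) hsm
        rw [hc_def, hint, hYX, ENNReal.toReal_rpow]
      have hofc : ENNReal.ofReal cval = X ^ (1 / p) := by
        rw [hcX, ENNReal.ofReal_toReal
          (ENNReal.rpow_ne_top_of_nonneg (by positivity) hXfin)]
      -- cost of T
      set Y : ℝ≥0∞ := ∫⁻ x, ENNReal.ofReal ‖T x - x‖ ^ p
        ∂(Measure.map (Φ s) μi) with hY_def
      have hYm : Measurable fun x : En n => ENNReal.ofReal ‖T x - x‖ ^ p :=
        ((hT.sub measurable_id).norm.ennreal_ofReal).pow measurable_const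
      have hY2 : Y = ∫⁻ y, ENNReal.ofReal ‖Ψ s (γ y) - Φ s y‖ ^ p ∂μi := by
        rw [hY_def, lintegral_map hYm (hΦm s)]
        exact lintegral_congr fun y => by
          simp only [hT_def, isFlow_inv_left hΦ hw₁' s y]
      set f₁ : En n → ℝ≥0∞ := fun y => ENNReal.ofReal (A * ‖γ y - y‖) with hf₁_def
      set f₂ : En n → ℝ≥0∞ := fun _ => ENNReal.ofReal B with hf₂_def
      have hf₁m : AEMeasurable f₁ μi :=
        (((hγ.sub measurable_id).norm.const_mul A).ennreal_ofReal).aemeasurable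
      have hpoint : Y ≤ ∫⁻ y, (f₁ + f₂) y ^ p ∂μi := by
        rw [hY2]
        refine lintegral_mono fun y => ENNReal.rpow_le_rpow ?_ hp0.le
        simp only [Pi.add_apply, hf₁_def, hf₂_def]
        calc ENNReal.ofReal ‖Ψ s (γ y) - Φ s y‖
            ≤ ENNReal.ofReal (A * ‖γ y - y‖ + B) :=
              ENNReal.ofReal_le_ofReal (key y (γ y))
          _ = ENNReal.ofReal (A * ‖γ y - y‖) + ENNReal.ofReal B :=
              ENNReal.ofReal_add (mul_nonneg hA0.le (norm_nonneg _)) hB0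
      have hmink := ENNReal.lintegral_Lp_add_le hf₁m
        (aemeasurable_const (b := ENNReal.ofReal B)) hp
      have ht1 : (∫⁻ y, f₁ y ^ p ∂μi) ^ (1 / p) = ENNReal.ofReal A * X ^ (1 / p) := by
        have e1 : ∀ y : En n, f₁ y ^ p =
            ENNReal.ofReal A ^ p * ENNReal.ofReal ‖γ y - y‖ ^ p := fun y => by
          simp only [hf₁_def]
          rw [ENNReal.ofReal_mul hA0.le, ENNReal.mul_rpow_of_nonneg _ _ hp0.le]
        rw [lintegral_congr e1, lintegral_const_mul' _ _
            (ENNReal.rpow_ne_top_of_nonneg hp0.le ENNReal.ofReal_ne_top), ← hX_def,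
          ENNReal.mul_rpow_of_nonneg _ _ (by positivity : (0:ℝ) ≤ 1 / p),
          ← ENNReal.rpow_mul, mul_one_div, div_self hp0.ne', ENNReal.rpow_one]
      have ht2 : (∫⁻ y, f₂ y ^ p ∂μi) ^ (1 / p) = ENNReal.ofReal B := by
        simp only [hf₂_def]
        rw [lintegral_const, measure_univ, mul_one, ← ENNReal.rpow_mul,
          mul_one_div, div_self hp0.ne', ENNReal.rpow_one]
      have hYle : Y ^ (1 / p) ≤ ENNReal.ofReal (A * cval + B) := by
        calc Y ^ (1 / p)
            ≤ (∫⁻ y, (f₁ + f₂) y ^ p ∂μi) ^ (1 / p) :=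
              ENNReal.rpow_le_rpow hpoint (by positivity)
          _ ≤ (∫⁻ y, f₁ y ^ p ∂μi) ^ (1 / p) + (∫⁻ y, f₂ y ^ p ∂μi) ^ (1 / p) := hmink
          _ = ENNReal.ofReal A * X ^ (1 / p) + ENNReal.ofReal B := by rw [ht1, ht2]
          _ = ENNReal.ofReal (A * cval + B) := by
              rw [← hofc, ← ENNReal.ofReal_mul hA0.le,
                ← ENNReal.ofReal_add (mul_nonneg hA0.le hcval0) hB0]
      have hmem : ((∫ x, ‖T x - x‖ ^ p ∂(Measure.map (Φ s) μi)) ^ (1 / p)) ∈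
          TSet n p (Measure.map (Φ s) μi) (Measure.map (Ψ s) νi) := ⟨T, hT, hTmap, rfl⟩
      have hYX' : (∫⁻ x, ENNReal.ofReal (‖T x - x‖ ^ p) ∂(Measure.map (Φ s) μi)) = Y := by
        rw [hY_def]
        exact lintegral_congr fun x => by
          rw [ENNReal.ofReal_rpow_of_nonneg (norm_nonneg _) hp0.le]
      have hcost : (∫ x, ‖T x - x‖ ^ p ∂(Measure.map (Φ s) μi)) ^ (1 / p) =
          (Y ^ (1 / p)).toReal := by
        have hsm : AEStronglyMeasurable (fun x : En n => ‖T x - x‖ ^ p)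
            (Measure.map (Φ s) μi) :=
          (((hT.sub measurable_id).norm.pow measurable_const :
            Measurable fun x : En n => ‖T x - x‖ ^ p)).aestronglyMeasurable
        have hint := integral_eq_lintegral_of_nonneg_ae
          (μ := Measure.map (Φ s) μi) (f := fun x : En n => ‖T x - x‖ ^ p)
          (Filter.Eventually.of_forall fun x => Real.rpow_nonneg (norm_nonneg _) p) hsm
        rw [hint, hYX', ENNReal.toReal_rpow]
      have hfinal : (∫ x, ‖T x - x‖ ^ p ∂(Measure.map (Φ s) μi)) ^ (1 / p) ≤
          A * cval + B := by
        rw [hcost]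
        exact ENNReal.toReal_le_of_le_ofReal
          (add_nonneg (mul_nonneg hA0.le hcval0) hB0) hYle
      exact le_trans (csInf_le (TSet_bddBelow _ _ _) hmem) hfinal
    have h2 : (Wp n p (Measure.map (Φ s) μi) (Measure.map (Ψ s) νi) - B) / A ≤
        Wp n p μi νi := by
      refine le_csInf hne fun c hc => ?_
      have h3 := main c hc
      rw [div_le_iff₀ hA0]
      linarith [mul_comm A c]
    have h3 := (div_le_iff₀ hA0).mp h2
    linarith [mul_comm A (Wp n p μi νi), h3]
  · -- the Monge set downstairs is empty
    have h1 : TSet n p μi νi = ∅ := not_nonempty_iff_eq_empty.mp hne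
    have h2 : TSet n p (Measure.map (Φ s) μi) (Measure.map (Ψ s) νi) = ∅ := by
      rw [eq_empty_iff_forall_notMem]
      rintro c ⟨T', hT', hmap', -⟩
      have hγ : Measurable fun y => Ψ (-s) (T' (Φ s y)) :=
        (hΨm _).comp (hT'.comp (hΦm _))
      have hmap : Measure.map (fun y => Ψ (-s) (T' (Φ s y))) μi = νi := by
        have e1 : (fun y => Ψ (-s) (T' (Φ s y))) = Ψ (-s) ∘ (T' ∘ Φ s) := rfl
        rw [e1, ← Measure.map_map (hΨm _) (hT'.comp (hΦm _)),
          ← Measure.map_map hT' (hΦm _), hmap',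
          Measure.map_map (hΨm _) (hΨm _)]
        have e2 : Ψ (-s) ∘ Ψ s = id := funext fun x => isFlow_inv_left hΨ hw₂' s x
        rw [e2, Measure.map_id]
      have hm : ((∫ x, ‖(fun y => Ψ (-s) (T' (Φ s y))) x - x‖ ^ p ∂μi) ^ (1 / p)) ∈
          TSet n p μi νi := ⟨_, hγ, hmap, rfl⟩
      rw [h1] at hm
      exact hm
    rw [Wp_eq, Wp_eq, h1, h2, Real.sInf_empty]
    nlinarith


theorem step_estimate' {p : ℝ} (hp : 1 ≤ p) {L Kc : ℝ} (hL : 0 < L) (hK : 0 ≤ Kc)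
    {w₁ w₂ : En n → En n}
    (hw₁ : ∀ x y, ‖w₁ x - w₁ y‖ ≤ L * ‖x - y‖)
    (hw₂ : ∀ x y, ‖w₂ x - w₂ y‖ ≤ L * ‖x - y‖)
    {μi νi : Measure (En n)} (hμP : IsProbabilityMeasure μi)
    (hνP : IsProbabilityMeasure νi)
    (hve : ∀ z, ‖w₁ z - w₂ z‖ ≤ Kc * Wp n p μi νi)
    {Kμ Kν : Set (En n)} (hKμ : IsCompact Kμ) (hμK : μi Kμᶜ = 0)
    (hKν : IsCompact Kν) (hνK : νi Kνᶜ = 0)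
    {Φ Ψ : ℝ → En n → En n} (hΦ : IsFlow n w₁ Φ) (hΨ : IsFlow n w₂ Ψ)
    {s Δ : ℝ} (hs : 0 ≤ s) (hsΔ : s ≤ Δ) :
    Wp n p (Measure.map (Φ s) μi) (Measure.map (Ψ s) νi) ≤
      (Real.exp (L * Δ) + Kc * (Real.exp (L * Δ) - 1) / L) * Wp n p μi νi := by
  have hW0 : 0 ≤ Wp n p μi νi := Wp_nonneg p μi νi
  have h := step_estimate hp hL (mul_nonneg hK hW0) hw₁ hw₂ hve hμP hνP hKμ hμK hKν hνK
    hΦ hΨ hs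
  have he : Real.exp (L * s) ≤ Real.exp (L * Δ) :=
    Real.exp_le_exp.2 (mul_le_mul_of_nonneg_left hsΔ hL.le)
  have he1 : 1 ≤ Real.exp (L * s) := Real.one_le_exp (mul_nonneg hL.le hs)
  refine h.trans ?_
  have hd : (Real.exp (L * s) - 1) / L ≤ (Real.exp (L * Δ) - 1) / L := by
    gcongr <;> linarith
  have hd0 : 0 ≤ (Real.exp (L * s) - 1) / L := div_nonneg (by linarith) hL.le
  have e1 : Kc * Wp n p μi νi * (Real.exp (L * s) - 1) / L =
      Kc * Wp n p μi νi * ((Real.exp (L * s) - 1) / L) := by ring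
  have e2 : (Real.exp (L * Δ) + Kc * (Real.exp (L * Δ) - 1) / L) * Wp n p μi νi =
      Real.exp (L * Δ) * Wp n p μi νi +
        Kc * Wp n p μi νi * ((Real.exp (L * Δ) - 1) / L) := by ring
  rw [e1, e2]
  have t1 : Real.exp (L * s) * Wp n p μi νi ≤ Real.exp (L * Δ) * Wp n p μi νi :=
    mul_le_mul_of_nonneg_right he hW0
  have t2 : Kc * Wp n p μi νi * ((Real.exp (L * s) - 1) / L) ≤
      Kc * Wp n p μi νi * ((Real.exp (L * Δ) - 1) / L) :=
    mul_le_mul_of_nonneg_left hd (mul_nonneg hK hW0)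
  linarith

theorem lipOfBound {w : En n → En n} {L : ℝ} (hL : 0 ≤ L)
    (h : ∀ x y, ‖w x - w y‖ ≤ L * ‖x - y‖) : LipschitzWith L.toNNReal w :=
  LipschitzWith.of_dist_le_mul fun x y => by
    rw [dist_eq_norm, dist_eq_norm, Real.coe_toNNReal _ hL]; exact h x y

end Stmt10Aux

open Stmt10Aux

/-- Continuous dependence on the initial data for Scheme 1:
`d(μᵏ,νᵏ) ≤ (e^{((p+1)/p)LΔt} + e^{LΔt/p}(e^{LΔt}-1)K/L)^{2ᵏ} W_p(μ₀,ν₀)`. -/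
theorem stmt10 (n : ℕ) (p T : ℝ) (hp : 1 ≤ p) (hT : 0 < T)
    (v : Measure (En n) → En n → En n) (L M K : ℝ) (hH : HypH n p v L M K)
    (μ₀ ν₀ : Measure (En n)) (hμ₀ : MemM n μ₀) (hν₀ : MemM n ν₀)
    (k : ℕ) (μ ν : ℝ → Measure (En n))
    (hμ : Scheme1 n v μ₀ (T / 2 ^ k) T μ)
    (hν : Scheme1 n v ν₀ (T / 2 ^ k) T ν) :
    ∀ t ∈ Icc (0 : ℝ) T,
      Wp n p (μ t) (ν t) ≤
        (Real.exp ((p + 1) / p * L * (T / 2 ^ k)) +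
            Real.exp (L * (T / 2 ^ k) / p) * (Real.exp (L * (T / 2 ^ k)) - 1) * K / L)
          ^ (2 ^ k) * Wp n p μ₀ ν₀ := by
  obtain ⟨hL, hM, hK, -, hLip, -, hKW⟩ := hH
  intro t ht
  set Δt := T / 2 ^ k with hΔt_def
  have h2k : (0:ℝ) < 2 ^ k := by positivity
  have hΔt : 0 < Δt := by rw [hΔt_def]; positivity
  have hT2 : T = 2 ^ k * Δt := by rw [hΔt_def]; field_simp
  have hp0 : 0 < p := lt_of_lt_of_le one_pos hp
  have hexp1 : 1 ≤ Real.exp (L * Δt) :=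
    Real.one_le_exp (mul_nonneg hL.le hΔt.le)
  set c₁ := Real.exp (L * Δt) + K * (Real.exp (L * Δt) - 1) / L with hc₁_def
  have hc₁1 : 1 ≤ c₁ := by
    have h0 : 0 ≤ K * (Real.exp (L * Δt) - 1) / L :=
      div_nonneg (mul_nonneg hK.le (by linarith)) hL.le
    rw [hc₁_def]; linarith
  set base := Real.exp ((p + 1) / p * L * Δt) +
      Real.exp (L * Δt / p) * (Real.exp (L * Δt) - 1) * K / L with hbase_def
  have hc₁base : c₁ ≤ base := by
    have h1 : Real.exp (L * Δt) ≤ Real.exp ((p + 1) / p * L * Δt) := by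
      apply Real.exp_le_exp.2
      have h1p : 1 ≤ (p + 1) / p := by rw [le_div_iff₀ hp0]; linarith
      nlinarith [mul_nonneg hL.le hΔt.le]
    have h3 : 1 ≤ Real.exp (L * Δt / p) := Real.one_le_exp (by positivity)
    have h2 : K * (Real.exp (L * Δt) - 1) / L ≤
        Real.exp (L * Δt / p) * (Real.exp (L * Δt) - 1) * K / L := by
      have h4 : K * (Real.exp (L * Δt) - 1) ≤
          Real.exp (L * Δt / p) * (Real.exp (L * Δt) - 1) * K := by
        nlinarith [mul_nonneg hK.le (sub_nonneg.2 hexp1)]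
      exact (div_le_div_iff_of_pos_right hL).2 h4
    rw [hc₁_def, hbase_def]; linarith
  have hbase1 : 1 ≤ base := le_trans hc₁1 hc₁base
  have hW0 : 0 ≤ Wp n p μ₀ ν₀ := Wp_nonneg p μ₀ ν₀
  -- the inductive invariant at grid points
  have key : ∀ i : ℕ, i ≤ 2 ^ k →
      MemM n (μ ((i : ℝ) * Δt)) ∧ MemM n (ν ((i : ℝ) * Δt)) ∧
      Wp n p (μ ((i : ℝ) * Δt)) (ν ((i : ℝ) * Δt)) ≤ c₁ ^ i * Wp n p μ₀ ν₀ := by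
    intro i
    induction i with
    | zero =>
      intro _
      simp only [Nat.cast_zero, zero_mul]
      rw [hμ.1, hν.1]
      exact ⟨hμ₀, hν₀, by simp⟩
    | succ i ih =>
      intro hi1
      have hi : i ≤ 2 ^ k := le_of_lt (Nat.lt_of_lt_of_le (Nat.lt_succ_self i) hi1)
      obtain ⟨hμi, hνi, hWi⟩ := ih hi
      have hcond1 : (i : ℝ) * Δt ≤ ((i : ℝ) + 1) * Δt := by nlinarith [hΔt.le]
      have hcond3 : ((i : ℝ) + 1) * Δt ≤ T := by
        rw [hT2]
        have hcast : ((i : ℝ) + 1) ≤ 2 ^ k := by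
          have h := (Nat.cast_le (α := ℝ)).2 hi1
          push_cast at h ⊢
          linarith
        nlinarith [hΔt.le]
      obtain ⟨Φ, hΦ, hμmap⟩ := hμ.2 i (((i : ℝ) + 1) * Δt) hcond1 (le_refl _) hcond3
      obtain ⟨Ψ, hΨ, hνmap⟩ := hν.2 i (((i : ℝ) + 1) * Δt) hcond1 (le_refl _) hcond3
      have hdiff : ((i : ℝ) + 1) * Δt - (i : ℝ) * Δt = Δt := by ring
      rw [hdiff] at hμmap hνmap
      have hw₁ := hLip _ hμi
      have hw₂ := hLip _ hνi
      have hw₁' : LipschitzWith L.toNNReal (v (μ ((i : ℝ) * Δt))) := lipOfBound hL.le hw₁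
      have hw₂' : LipschitzWith L.toNNReal (v (ν ((i : ℝ) * Δt))) := lipOfBound hL.le hw₂
      have hcast : ((i + 1 : ℕ) : ℝ) = (i : ℝ) + 1 := by push_cast; ring
      obtain ⟨hμP, hμAC, Kμ, hKμ, hμKc⟩ := hμi
      obtain ⟨hνP, hνAC, Kν, hKν, hνKc⟩ := hνi
      have hμi' : MemM n (μ ((i : ℝ) * Δt)) := ⟨hμP, hμAC, Kμ, hKμ, hμKc⟩
      have hνi' : MemM n (ν ((i : ℝ) * Δt)) := ⟨hνP, hνAC, Kν, hKν, hνKc⟩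
      refine ⟨?_, ?_, ?_⟩
      · rw [hcast, hμmap]
        exact memM_map hμi' (isFlow_lipschitzWith hΦ hw₁' Δt)
          (isFlow_lipschitzWith hΦ hw₁' (-Δt))
          (fun x => isFlow_inv_left hΦ hw₁' Δt x)
      · rw [hcast, hνmap]
        exact memM_map hνi' (isFlow_lipschitzWith hΨ hw₂' Δt)
          (isFlow_lipschitzWith hΨ hw₂' (-Δt))
          (fun x => isFlow_inv_left hΨ hw₂' Δt x)
      · have hstep := step_estimate' (Δ := Δt) hp hL hK.le hw₁ hw₂ hμP hνP
          (fun z => hKW _ _ hμi' hνi' z) hKμ hμKc hKν hνKc hΦ hΨ hΔt.le (le_refl _)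
        calc Wp n p (μ (((i + 1 : ℕ) : ℝ) * Δt)) (ν (((i + 1 : ℕ) : ℝ) * Δt))
            = Wp n p (Measure.map (Φ Δt) (μ ((i : ℝ) * Δt)))
                (Measure.map (Ψ Δt) (ν ((i : ℝ) * Δt))) := by
              rw [hcast, hμmap, hνmap]
          _ ≤ c₁ * Wp n p (μ ((i : ℝ) * Δt)) (ν ((i : ℝ) * Δt)) := by
              rw [hc₁_def]; exact hstep
          _ ≤ c₁ * (c₁ ^ i * Wp n p μ₀ ν₀) :=
              mul_le_mul_of_nonneg_left hWi (by linarith)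
          _ = c₁ ^ (i + 1) * Wp n p μ₀ ν₀ := by ring
  -- locate `t` on the grid
  set i := ⌊t / Δt⌋₊ with hi_def
  have hidiv : (i : ℝ) ≤ t / Δt := Nat.floor_le (div_nonneg ht.1 hΔt.le)
  have hile : (i : ℝ) * Δt ≤ t := by
    rw [← le_div_iff₀ hΔt]; exact hidiv
  have hup : t ≤ ((i : ℝ) + 1) * Δt := by
    have hlt : t / Δt < (i : ℝ) + 1 := Nat.lt_floor_add_one _
    exact le_of_lt ((div_lt_iff₀ hΔt).1 hlt)
  have hik : i ≤ 2 ^ k := by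
    by_contra hcon
    push_neg at hcon
    have h1 : ((2 ^ k : ℕ) : ℝ) + 1 ≤ (i : ℝ) := by
      have := (Nat.cast_le (α := ℝ)).2 (Nat.succ_le_of_lt hcon)
      push_cast at this ⊢
      linarith
    have h2 : t / Δt ≤ (2 ^ k : ℝ) := by
      rw [div_le_iff₀ hΔt]
      rw [hT2] at ht
      exact ht.2
    push_cast at h1
    linarith
  have hpowbound : ∀ j : ℕ, j ≤ 2 ^ k → c₁ ^ j * Wp n p μ₀ ν₀ ≤
      base ^ 2 ^ k * Wp n p μ₀ ν₀ := by
    intro j hj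
    apply mul_le_mul_of_nonneg_right _ hW0
    calc c₁ ^ j ≤ base ^ j := pow_le_pow_left₀ (by linarith) hc₁base j
      _ ≤ base ^ 2 ^ k := pow_le_pow_right₀ hbase1 hj
  rcases eq_or_lt_of_le hik with heq | hltk
  · -- `t` is the right endpoint `T`
    have hiT : (i : ℝ) * Δt = T := by
      rw [hT2, heq]
      push_cast
      ring
    have htT : t = (i : ℝ) * Δt := by
      rw [hiT]
      exact le_antisymm ht.2 (by rw [← hiT]; exact hile)
    obtain ⟨-, -, hW⟩ := key i hik
    rw [htT]
    exact hW.trans (hpowbound i hik)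
  · -- `t` lies in the interior interval `[iΔt, (i+1)Δt]`
    have hi1 : i + 1 ≤ 2 ^ k := Nat.succ_le_of_lt hltk
    obtain ⟨hμi, hνi, hWi⟩ := key i hik
    obtain ⟨Φ, hΦ, hμmap⟩ := hμ.2 i t hile hup ht.2
    obtain ⟨Ψ, hΨ, hνmap⟩ := hν.2 i t hile hup ht.2
    have hw₁ := hLip _ hμi
    have hw₂ := hLip _ hνi
    obtain ⟨hμP, hμAC, Kμ, hKμ, hμKc⟩ := hμi
    obtain ⟨hνP, hνAC, Kν, hKν, hνKc⟩ := hνi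
    have hμi' : MemM n (μ ((i : ℝ) * Δt)) := ⟨hμP, hμAC, Kμ, hKμ, hμKc⟩
    have hνi' : MemM n (ν ((i : ℝ) * Δt)) := ⟨hνP, hνAC, Kν, hKν, hνKc⟩
    have hs0 : 0 ≤ t - (i : ℝ) * Δt := by linarith
    have hsΔ : t - (i : ℝ) * Δt ≤ Δt := by nlinarith [hup]
    have hstep := step_estimate' (Δ := Δt) hp hL hK.le hw₁ hw₂ hμP hνP
      (fun z => hKW _ _ hμi' hνi' z) hKμ hμKc hKν hνKc hΦ hΨ hs0 hsΔ
    calc Wp n p (μ t) (ν t)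
        = Wp n p (Measure.map (Φ (t - (i : ℝ) * Δt)) (μ ((i : ℝ) * Δt)))
            (Measure.map (Ψ (t - (i : ℝ) * Δt)) (ν ((i : ℝ) * Δt))) := by
          rw [← hμmap, ← hνmap]
      _ ≤ c₁ * Wp n p (μ ((i : ℝ) * Δt)) (ν ((i : ℝ) * Δt)) := by
          rw [hc₁_def]; exact hstep
      _ ≤ c₁ * (c₁ ^ i * Wp n p μ₀ ν₀) :=
          mul_le_mul_of_nonneg_left hWi (by linarith)
      _ = c₁ ^ (i + 1) * Wp n p μ₀ ν₀ := by ring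
      _ ≤ base ^ 2 ^ k * Wp n p μ₀ ν₀ := hpowbound (i + 1) hi1

end
end
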